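/- arXiv:1709.03684 — 3 statements merged into one kernel-verified Lean document; each statement's English description precedes it below -/
import Mathlib

section
/- Let X and Y be finite multisets in a metric space with distinguished submultisets X₁ ⊆ X and Y₁ ⊆ Y. Suppose that for every submultiset X' ⊆ X₁, #{y ∈ Y : dist(y, X') < ε} ≥ #(X'), and for every submultiset Y' ⊆ Y₁, #{x ∈ X : dist(x, Y') < ε} ≥ #(Y'). Then there exist submultisets X₀ ⊆ X and Y₀ ⊆ Y with X₁ ⊆ X₀ and Y₁ ⊆ Y₀ such that X₀ and Y₀ can be paired one-to-one within ε. -/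
open scoped Classical

/-- Reachability used in the Mendelsohn–Dulmage argument. -/
inductive MDReach {A B : Type*} (A₁ : Set A) (B₁ : Set B) (f : A → B) (g : B → A) : B → Prop
  | base (b : B) (hb : b ∈ B₁) (h : b ∉ f '' A₁) : MDReach A₁ B₁ f g b
  | step (b : B) (hb : MDReach A₁ B₁ f g b) (hb1 : b ∈ B₁) (hg : g b ∈ A₁) :
      MDReach A₁ B₁ f g (f (g b))

theorem MDReach.cases'' {A B : Type*} {A₁ : Set A} {B₁ : Set B} {f : A → B} {g : B → A} {b : B}
    (h : MDReach A₁ B₁ f g b) :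
    (b ∈ B₁ ∧ b ∉ f '' A₁) ∨
      ∃ b', MDReach A₁ B₁ f g b' ∧ b' ∈ B₁ ∧ g b' ∈ A₁ ∧ b = f (g b') := by
  cases h with
  | base b hb hn => exact Or.inl ⟨hb, hn⟩
  | step b' hb' hb1 hg => exact Or.inr ⟨b', hb', hb1, hg, rfl⟩

/-- Mendelsohn–Dulmage: combine two one-sided matchings into one covering both sides. -/
theorem md_lemma {A B : Type*} [Fintype A] [Fintype B] [DecidableEq A] [DecidableEq B]
    (A₁ : Finset A) (B₁ : Finset B) (E : A → B → Prop) (f : A → B) (g : B → A)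
    (hf : Set.InjOn f A₁) (hg : Set.InjOn g B₁)
    (hfe : ∀ a ∈ A₁, E a (f a)) (hge : ∀ b ∈ B₁, E (g b) b) :
    ∃ M : Finset (A × B), (∀ p ∈ M, E p.1 p.2) ∧
      Set.InjOn Prod.fst (M : Set (A × B)) ∧ Set.InjOn Prod.snd (M : Set (A × B)) ∧
      (∀ a ∈ A₁, ∃ p ∈ M, p.1 = a) ∧ (∀ b ∈ B₁, ∃ p ∈ M, p.2 = b) := by
  set R : B → Prop := MDReach (A₁ : Set A) (B₁ : Set B) f g with hR
  set T : Finset B := B₁.filter R with hT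
  set M₁ : Finset (A × B) := T.image (fun b => (g b, b)) with hM₁
  set M₂ : Finset (A × B) := (A₁.filter (fun a => ∀ b ∈ T, g b ≠ a)).image (fun a => (a, f a))
    with hM₂
  refine ⟨M₁ ∪ M₂, ?_, ?_, ?_, ?_, ?_⟩
  · intro p hp
    rcases Finset.mem_union.1 hp with h | h
    · obtain ⟨b, hb, rfl⟩ := Finset.mem_image.1 h
      exact hge b (Finset.mem_filter.1 hb).1
    · obtain ⟨a, ha, rfl⟩ := Finset.mem_image.1 h
      exact hfe a (Finset.mem_filter.1 ha).1
  · -- InjOn fst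
    intro p hp q hq hpq
    simp only [Finset.coe_union, Set.mem_union, Finset.mem_coe] at hp hq
    have key : ∀ r ∈ M₁, ∀ s ∈ M₂, r.1 ≠ s.1 := by
      intro r hr s hs
      obtain ⟨b, hb, rfl⟩ := Finset.mem_image.1 hr
      obtain ⟨a, ha, rfl⟩ := Finset.mem_image.1 hs
      exact fun h => (Finset.mem_filter.1 ha).2 b hb h
    rcases hp with hp | hp <;> rcases hq with hq | hq
    · obtain ⟨b, hb, rfl⟩ := Finset.mem_image.1 hp
      obtain ⟨b', hb', rfl⟩ := Finset.mem_image.1 hq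
      have := hg (Finset.mem_filter.1 hb).1 (Finset.mem_filter.1 hb').1 hpq
      simp [this]
    · exact absurd hpq (key _ hp _ hq)
    · exact absurd hpq.symm (key _ hq _ hp)
    · obtain ⟨a, ha, rfl⟩ := Finset.mem_image.1 hp
      obtain ⟨a', ha', rfl⟩ := Finset.mem_image.1 hq
      simp_all
  · -- InjOn snd
    intro p hp q hq hpq
    simp only [Finset.coe_union, Set.mem_union, Finset.mem_coe] at hp hq
    have key : ∀ r ∈ M₁, ∀ s ∈ M₂, r.2 ≠ s.2 := by
      intro r hr s hs
      obtain ⟨b, hb, rfl⟩ := Finset.mem_image.1 hr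
      obtain ⟨a, ha, rfl⟩ := Finset.mem_image.1 hs
      intro h
      -- b = f a, b ∈ T (reachable); inversion
      obtain ⟨haA, haT⟩ := Finset.mem_filter.1 ha
      have hbR : R b := (Finset.mem_filter.1 hb).2
      simp only [] at h
      rw [h] at hbR
      rcases MDReach.cases'' hbR with ⟨_, hnot⟩ | ⟨b', hb', hb1', hg', heq⟩
      · exact hnot ⟨a, haA, rfl⟩
      · have : a = g b' := hf haA hg' heq
        exact haT b' (Finset.mem_filter.2 ⟨hb1', hb'⟩) this.symm
    rcases hp with hp | hp <;> rcases hq with hq | hq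
    · obtain ⟨b, hb, rfl⟩ := Finset.mem_image.1 hp
      obtain ⟨b', hb', rfl⟩ := Finset.mem_image.1 hq
      simp_all
    · exact absurd hpq (key _ hp _ hq)
    · exact ((key q hq p hp) hpq.symm).elim
    · obtain ⟨a, ha, rfl⟩ := Finset.mem_image.1 hp
      obtain ⟨a', ha', rfl⟩ := Finset.mem_image.1 hq
      have := hf (Finset.mem_filter.1 ha).1 (Finset.mem_filter.1 ha').1 hpq
      simp [this]
  · -- covers A₁
    intro a ha
    by_cases h : ∃ b ∈ T, g b = a
    · obtain ⟨b, hb, rfl⟩ := h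
      exact ⟨(g b, b), Finset.mem_union_left _ (Finset.mem_image_of_mem _ hb), rfl⟩
    · push_neg at h
      exact ⟨(a, f a), Finset.mem_union_right _
        (Finset.mem_image_of_mem _ (Finset.mem_filter.2 ⟨ha, h⟩)), rfl⟩
  · -- covers B₁
    intro b hb
    by_cases hbR : R b
    · exact ⟨(g b, b), Finset.mem_union_left _
        (Finset.mem_image_of_mem _ (Finset.mem_filter.2 ⟨hb, hbR⟩)), rfl⟩
    · have hbf : b ∈ f '' (A₁ : Set A) := by
        by_contra h
        exact hbR (MDReach.base b hb h)
      obtain ⟨a, haA, rfl⟩ := hbf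
      by_cases h : ∀ b' ∈ T, g b' ≠ a
      · exact ⟨(a, f a), Finset.mem_union_right _
          (Finset.mem_image_of_mem _ (Finset.mem_filter.2 ⟨haA, h⟩)), rfl⟩
      · push_neg at h
        obtain ⟨b', hb', rfl⟩ := h
        obtain ⟨hb'B, hb'R⟩ := Finset.mem_filter.1 hb'
        exact absurd (MDReach.step b' hb'R hb'B haA) hbR


theorem hall_aux {α : Type*} [MetricSpace α] (ε : ℝ) (L1 LY : List α)
    (h : ∀ X' ≤ (↑L1 : Multiset α), Multiset.card X' ≤
      Multiset.countP (fun y => ∃ x ∈ X', dist y x < ε) ↑LY) :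
    ∃ f : Fin L1.length → Fin LY.length, Function.Injective f ∧
      ∀ i, dist (LY.get (f i)) (L1.get i) < ε := by
  have huX : ∀ (L : List α), Multiset.map L.get (Finset.univ : Finset (Fin L.length)).val
      = (↑L : Multiset α) := by
    intro L
    rw [Fin.univ_def]
    show Multiset.map L.get ↑(List.finRange L.length) = _
    rw [Multiset.map_coe, List.map_get_finRange]
  have := (Fintype.all_card_le_filter_rel_iff_exists_injective
    (fun (i : Fin L1.length) (j : Fin LY.length) => dist (LY.get j) (L1.get i) < ε)).1 ?_
  · obtain ⟨f, hf, hfe⟩ := this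
    exact ⟨f, hf, fun i => hfe i⟩
  · intro A
    set X' : Multiset α := A.val.map L1.get with hX'
    have h1 : X' ≤ ↑L1 := by
      rw [← huX L1]
      exact Multiset.map_le_map (Finset.val_le_iff.2 (Finset.subset_univ A))
    have h2 := h X' h1
    rw [hX', Multiset.card_map] at h2
    refine le_trans h2 (le_of_eq ?_)
    rw [← huX LY, Multiset.countP_map]
    show Multiset.card _ = Finset.card _
    rw [Finset.card_def, Finset.filter_val]
    congr 1
    convert Multiset.filter_congr ?_
    intro j _
    constructor
    · rintro ⟨x, hx, hd⟩
      obtain ⟨i, hi, rfl⟩ := Multiset.mem_map.1 hx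
      exact ⟨i, hi, hd⟩
    · rintro ⟨i, hi, hd⟩
      exact ⟨L1.get i, Multiset.mem_map.2 ⟨i, hi, rfl⟩, hd⟩

theorem univ_map_get {α : Type*} (L : List α) :
    Multiset.map L.get (Finset.univ : Finset (Fin L.length)).val = (↑L : Multiset α) := by
  rw [Fin.univ_def]
  show Multiset.map L.get ↑(List.finRange L.length) = _
  rw [Multiset.map_coe, List.map_get_finRange]

open scoped Classical in
theorem generalized_pairing_lemma {α : Type*} [MetricSpace α] (ε : ℝ)
    (X Y X₁ Y₁ : Multiset α) (hX₁ : X₁ ≤ X) (hY₁ : Y₁ ≤ Y)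
    (hX : ∀ X' ≤ X₁, Multiset.card X' ≤
      Multiset.countP (fun y => ∃ x ∈ X', dist y x < ε) Y)
    (hY : ∀ Y' ≤ Y₁, Multiset.card Y' ≤
      Multiset.countP (fun x => ∃ y ∈ Y', dist x y < ε) X) :
    ∃ X₀ Y₀ : Multiset α, X₁ ≤ X₀ ∧ X₀ ≤ X ∧ Y₁ ≤ Y₀ ∧ Y₀ ≤ Y ∧
      ∃ Z : Multiset (α × α), Z.map Prod.fst = X₀ ∧ Z.map Prod.snd = Y₀ ∧
        ∀ z ∈ Z, dist z.1 z.2 < ε := by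
  -- degenerate cases
  by_cases hY0 : Y = 0
  · have hY₁0 : Y₁ = 0 := Multiset.le_zero.1 (hY0 ▸ hY₁)
    have hX₁0 : X₁ = 0 := by
      have := hX X₁ le_rfl
      rw [hY0, Multiset.countP_zero] at this
      exact Multiset.card_eq_zero.1 (Nat.le_zero.1 this)
    exact ⟨0, 0, hX₁0.le, Multiset.zero_le _, hY₁0.le, Multiset.zero_le _, 0, rfl, rfl,
      by simp⟩
  by_cases hX0 : X = 0
  · have hX₁0 : X₁ = 0 := Multiset.le_zero.1 (hX0 ▸ hX₁)
    have hY₁0 : Y₁ = 0 := by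
      have := hY Y₁ le_rfl
      rw [hX0, Multiset.countP_zero] at this
      exact Multiset.card_eq_zero.1 (Nat.le_zero.1 this)
    exact ⟨0, 0, hX₁0.le, Multiset.zero_le _, hY₁0.le, Multiset.zero_le _, 0, rfl, rfl,
      by simp⟩
  -- choose list representatives
  obtain ⟨LX1, hLX1⟩ : ∃ l : List α, (↑l : Multiset α) = X₁ := Quotient.exists_rep X₁
  obtain ⟨LX2, hLX2⟩ : ∃ l : List α, (↑l : Multiset α) = X - X₁ := Quotient.exists_rep _
  obtain ⟨LY1, hLY1⟩ : ∃ l : List α, (↑l : Multiset α) = Y₁ := Quotient.exists_rep Y₁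
  obtain ⟨LY2, hLY2⟩ : ∃ l : List α, (↑l : Multiset α) = Y - Y₁ := Quotient.exists_rep _
  set LX : List α := LX1 ++ LX2 with hLX
  set LY : List α := LY1 ++ LY2 with hLY
  have hXeq : (↑LX : Multiset α) = X := by
    show ((LX1 ++ LX2 : List α) : Multiset α) = X
    rw [← Multiset.coe_add, hLX1, hLX2]
    exact add_tsub_cancel_of_le hX₁
  have hYeq : (↑LY : Multiset α) = Y := by
    show ((LY1 ++ LY2 : List α) : Multiset α) = Y
    rw [← Multiset.coe_add, hLY1, hLY2]
    exact add_tsub_cancel_of_le hY₁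
  -- Hall's theorem on both sides
  obtain ⟨f₀, hf₀inj, hf₀e⟩ : ∃ f : Fin LX1.length → Fin LY.length, Function.Injective f ∧
      ∀ i, dist (LY.get (f i)) (LX1.get i) < ε := by
    apply hall_aux
    intro X' hX'
    rw [hLX1] at hX'
    rw [hYeq]
    exact hX X' hX'
  obtain ⟨g₀, hg₀inj, hg₀e⟩ : ∃ g : Fin LY1.length → Fin LX.length, Function.Injective g ∧
      ∀ j, dist (LX.get (g j)) (LY1.get j) < ε := by
    apply hall_aux
    intro Y' hY'
    rw [hLY1] at hY'
    rw [hXeq]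
    exact hY Y' hY'
  have hmpos : 0 < LX.length := by
    rcases Nat.eq_zero_or_pos LX.length with h | h
    · exact absurd (hXeq ▸ (by simp [List.length_eq_zero_iff.1 h] : (↑LX : Multiset α) = 0)) hX0
    · exact h
  have hnpos : 0 < LY.length := by
    rcases Nat.eq_zero_or_pos LY.length with h | h
    · exact absurd (hYeq ▸ (by simp [List.length_eq_zero_iff.1 h] : (↑LY : Multiset α) = 0)) hY0
    · exact h
  have hk₁ : LX1.length ≤ LX.length := by rw [hLX, List.length_append]; omega
  have hl₁ : LY1.length ≤ LY.length := by rw [hLY, List.length_append]; omega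
  -- set up the bipartite data
  set A₁ : Finset (Fin LX.length) := Finset.univ.filter (fun a => (a : ℕ) < LX1.length) with hA₁
  set B₁ : Finset (Fin LY.length) := Finset.univ.filter (fun b => (b : ℕ) < LY1.length) with hB₁
  set F : Fin LX.length → Fin LY.length :=
    fun a => if h : (a : ℕ) < LX1.length then f₀ ⟨a, h⟩ else ⟨0, hnpos⟩ with hF
  set G : Fin LY.length → Fin LX.length :=
    fun b => if h : (b : ℕ) < LY1.length then g₀ ⟨b, h⟩ else ⟨0, hmpos⟩ with hG
  set E : Fin LX.length → Fin LY.length → Prop :=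
    fun a b => dist (LX.get a) (LY.get b) < ε with hE
  have hgetX : ∀ (a : Fin LX.length) (h : (a : ℕ) < LX1.length),
      LX.get a = LX1.get ⟨a, h⟩ := by
    intro a h
    simp only [List.get_eq_getElem, hLX]
    exact List.getElem_append_left h
  have hgetY : ∀ (b : Fin LY.length) (h : (b : ℕ) < LY1.length),
      LY.get b = LY1.get ⟨b, h⟩ := by
    intro b h
    simp only [List.get_eq_getElem, hLY]
    exact List.getElem_append_left h
  obtain ⟨M, hME, hMfst, hMsnd, hMA, hMB⟩ := md_lemma A₁ B₁ E F G
    (by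
      intro a ha a' ha' hFa
      simp only [hA₁, Finset.coe_filter, Set.mem_setOf_eq, Finset.mem_univ, true_and] at ha ha'
      rw [hF] at hFa
      simp only [dif_pos ha, dif_pos ha'] at hFa
      have h2 := congrArg Fin.val (hf₀inj hFa)
      exact Fin.ext h2)
    (by
      intro b hb b' hb' hGb
      simp only [hB₁, Finset.coe_filter, Set.mem_setOf_eq, Finset.mem_univ, true_and] at hb hb'
      rw [hG] at hGb
      simp only [dif_pos hb, dif_pos hb'] at hGb
      have h2 := congrArg Fin.val (hg₀inj hGb)
      exact Fin.ext h2)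
    (by
      intro a ha
      simp only [hA₁, Finset.mem_filter, Finset.mem_univ, true_and] at ha
      rw [hE, hF]
      simp only [dif_pos ha]
      rw [hgetX a ha, dist_comm]
      exact hf₀e ⟨a, ha⟩)
    (by
      intro b hb
      simp only [hB₁, Finset.mem_filter, Finset.mem_univ, true_and] at hb
      rw [hE, hG]
      simp only [dif_pos hb]
      rw [hgetY b hb]
      exact hg₀e ⟨b, hb⟩)
  -- build the answer
  refine ⟨M.val.map (fun p => LX.get p.1), M.val.map (fun p => LY.get p.2),
    ?_, ?_, ?_, ?_, M.val.map (fun p => (LX.get p.1, LY.get p.2)), ?_, ?_, ?_⟩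
  · -- X₁ ≤ X₀
    have hS₁ : Multiset.map (fun i : Fin LX1.length => (⟨(i : ℕ), lt_of_lt_of_le i.2 hk₁⟩ :
        Fin LX.length)) (Finset.univ : Finset (Fin LX1.length)).val ≤ M.val.map Prod.fst := by
      rw [Multiset.le_iff_subset]
      · intro a ha
        obtain ⟨i, _, rfl⟩ := Multiset.mem_map.1 ha
        have haA : (⟨(i : ℕ), lt_of_lt_of_le i.2 hk₁⟩ : Fin LX.length) ∈ A₁ := by
          simp [hA₁, i.2]
        obtain ⟨p, hpM, hp1⟩ := hMA _ haA
        exact Multiset.mem_map.2 ⟨p, hpM, hp1⟩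
      · apply Multiset.Nodup.map_on
        · intro i _ j _ hij
          have h2 := congrArg Fin.val hij
          exact Fin.ext h2
        · exact Finset.univ.nodup
    calc X₁ = ↑LX1 := hLX1.symm
      _ = Multiset.map LX1.get (Finset.univ : Finset (Fin LX1.length)).val :=
        (univ_map_get LX1).symm
      _ = Multiset.map LX.get (Multiset.map (fun i : Fin LX1.length =>
          (⟨(i : ℕ), lt_of_lt_of_le i.2 hk₁⟩ : Fin LX.length)) Finset.univ.val) := by
        rw [Multiset.map_map]
        apply Multiset.map_congr rfl
        intro i _
        exact (hgetX ⟨(i : ℕ), lt_of_lt_of_le i.2 hk₁⟩ i.2).symm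
      _ ≤ Multiset.map LX.get (M.val.map Prod.fst) := Multiset.map_le_map hS₁
      _ = M.val.map (fun p => LX.get p.1) := by rw [Multiset.map_map]; rfl
  · -- X₀ ≤ X
    have h1 : M.val.map Prod.fst ≤ (Finset.univ : Finset (Fin LX.length)).val := by
      rw [Multiset.le_iff_subset]
      · intro a _; simp
      · exact Multiset.Nodup.map_on (fun p hp q hq h => hMfst hp hq h) M.nodup
    calc M.val.map (fun p => LX.get p.1)
        = Multiset.map LX.get (M.val.map Prod.fst) := by rw [Multiset.map_map]; rfl
      _ ≤ Multiset.map LX.get (Finset.univ : Finset (Fin LX.length)).val :=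
          Multiset.map_le_map h1
      _ = ↑LX := univ_map_get LX
      _ = X := hXeq
  · -- Y₁ ≤ Y₀
    have hS₁ : Multiset.map (fun j : Fin LY1.length => (⟨(j : ℕ), lt_of_lt_of_le j.2 hl₁⟩ :
        Fin LY.length)) (Finset.univ : Finset (Fin LY1.length)).val ≤ M.val.map Prod.snd := by
      rw [Multiset.le_iff_subset]
      · intro b hb
        obtain ⟨j, _, rfl⟩ := Multiset.mem_map.1 hb
        have hbB : (⟨(j : ℕ), lt_of_lt_of_le j.2 hl₁⟩ : Fin LY.length) ∈ B₁ := by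
          simp [hB₁, j.2]
        obtain ⟨p, hpM, hp2⟩ := hMB _ hbB
        exact Multiset.mem_map.2 ⟨p, hpM, hp2⟩
      · apply Multiset.Nodup.map_on
        · intro i _ j _ hij
          have h2 := congrArg Fin.val hij
          exact Fin.ext h2
        · exact Finset.univ.nodup
    calc Y₁ = ↑LY1 := hLY1.symm
      _ = Multiset.map LY1.get (Finset.univ : Finset (Fin LY1.length)).val :=
        (univ_map_get LY1).symm
      _ = Multiset.map LY.get (Multiset.map (fun j : Fin LY1.length =>
          (⟨(j : ℕ), lt_of_lt_of_le j.2 hl₁⟩ : Fin LY.length)) Finset.univ.val) := by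
        rw [Multiset.map_map]
        apply Multiset.map_congr rfl
        intro j _
        exact (hgetY ⟨(j : ℕ), lt_of_lt_of_le j.2 hl₁⟩ j.2).symm
      _ ≤ Multiset.map LY.get (M.val.map Prod.snd) := Multiset.map_le_map hS₁
      _ = M.val.map (fun p => LY.get p.2) := by rw [Multiset.map_map]; rfl
  · -- Y₀ ≤ Y
    have h1 : M.val.map Prod.snd ≤ (Finset.univ : Finset (Fin LY.length)).val := by
      rw [Multiset.le_iff_subset]
      · intro b _; simp
      · exact Multiset.Nodup.map_on (fun p hp q hq h => hMsnd hp hq h) M.nodup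
    calc M.val.map (fun p => LY.get p.2)
        = Multiset.map LY.get (M.val.map Prod.snd) := by rw [Multiset.map_map]; rfl
      _ ≤ Multiset.map LY.get (Finset.univ : Finset (Fin LY.length)).val :=
          Multiset.map_le_map h1
      _ = ↑LY := univ_map_get LY
      _ = Y := hYeq
  · rw [Multiset.map_map]; rfl
  · rw [Multiset.map_map]; rfl
  · intro z hz
    obtain ⟨p, hpM, rfl⟩ := Multiset.mem_map.1 hz
    exact hME p hpM
end

section
/- Let S be a finite multiset of points in (0,1), let K ≥ 1 and L ≥ 1 be integers. Then there exist points 0 = v₀ ≤ w₀ < v₁ ≤ w₁ < ⋯ < v_K ≤ w_K = 1 defining disjoint closed intervals V_r = [v_r, w_r] (some possibly degenerate) such that: (i) dist(V_r, V_s) ≥ 1/(K(L+1)) for r ≠ s; (ii) the diameter of each V_r is at most 2/K − 2/(K(L+1)); and (iii) the total number of points of S (with multiplicity) lying in ⋃_r V_r is at least (L/(L+1))·#(S). -/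
private lemma countP_bridge {α : Type*} (p : α → Prop) (i1 i2 : DecidablePred p)
    (S : Multiset α) : @Multiset.countP _ p i1 S = @Multiset.countP _ p i2 S :=
  @Multiset.countP_congr _ S S rfl p p i1 i2 (fun _ _ => rfl)

private lemma countP_imp_le {α : Type*} (p q : α → Prop) [DecidablePred p] [DecidablePred q]
    (S : Multiset α) (h : ∀ x ∈ S, p x → q x) : S.countP p ≤ S.countP q := by
  induction S using Multiset.induction with
  | empty => simp
  | cons a s ih =>
    simp only [Multiset.countP_cons]
    have h1 := ih (fun x hx => h x (Multiset.mem_cons_of_mem hx))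
    have h2 : (if p a then 1 else 0) ≤ (if q a then 1 else 0) := by
      by_cases hp : p a
      · simp [hp, h a (Multiset.mem_cons_self a s) hp]
      · simp [hp]
    omega

private lemma countP_or_le {α : Type*} (p q : α → Prop) [DecidablePred p] [DecidablePred q]
    [DecidablePred fun x => p x ∨ q x] (S : Multiset α) :
    S.countP (fun x => p x ∨ q x) ≤ S.countP p + S.countP q := by
  have h := congrArg Multiset.card (Multiset.filter_add_filter p q S)
  simp only [Multiset.card_add, ← Multiset.countP_eq_card_filter] at h
  have hbr : S.countP (fun x => p x ∨ q x)
      = @Multiset.countP _ (fun x => p x ∨ q x) (fun x => instDecidableOr) S :=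
    countP_bridge _ _ _ S
  omega

open scoped Classical in
private lemma countP_exists_le {α : Type*} (p : ℕ → α → Prop) (S : Multiset α) (n : ℕ) :
    S.countP (fun x => ∃ r < n, p r x) ≤ ∑ r ∈ Finset.range n, S.countP (p r) := by
  induction n with
  | zero => simp [Multiset.countP_eq_zero]
  | succ n ih =>
    rw [Finset.sum_range_succ]
    have heq : S.countP (fun x => ∃ r < n + 1, p r x)
        = S.countP (fun x => (∃ r < n, p r x) ∨ p n x) := by
      refine Multiset.countP_congr rfl fun x _ => ?_
      simp only [eq_iff_iff]
      constructor
      · rintro ⟨r, hr, h⟩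
        rcases Nat.lt_succ_iff_lt_or_eq.1 hr with h' | rfl
        · exact Or.inl ⟨r, h', h⟩
        · exact Or.inr h
      · rintro (⟨r, hr, h⟩ | h)
        · exact ⟨r, Nat.lt_succ_of_lt hr, h⟩
        · exact ⟨n, Nat.lt_succ_self n, h⟩
    rw [heq]
    refine (countP_or_le _ _ S).trans ?_
    have hbr : @Multiset.countP _ (fun x => ∃ r < n, p r x)
          (fun x => Classical.propDecidable _) S
        = S.countP (fun x => ∃ r < n, p r x) :=
      countP_bridge _ _ _ S
    omega

open scoped Classical in
private lemma countP_split (S : Multiset ℝ) (a m b : ℝ) (h1 : a ≤ m) (h2 : m ≤ b) :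
    S.countP (fun x => a < x ∧ x ≤ b) =
      S.countP (fun x => a < x ∧ x ≤ m) + S.countP (fun x => m < x ∧ x ≤ b) := by
  have h := congrArg Multiset.card
    (Multiset.filter_add_filter (fun x => a < x ∧ x ≤ m) (fun x => m < x ∧ x ≤ b) S)
  simp only [Multiset.card_add, ← Multiset.countP_eq_card_filter] at h
  have hz : S.countP (fun x => (a < x ∧ x ≤ m) ∧ (m < x ∧ x ≤ b)) = 0 :=
    Multiset.countP_eq_zero.2 (fun x _ hx => by linarith [hx.1.2, hx.2.1])
  have hcongr : S.countP (fun x => (a < x ∧ x ≤ m) ∨ (m < x ∧ x ≤ b)) =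
      S.countP (fun x => a < x ∧ x ≤ b) := by
    refine Multiset.countP_congr rfl fun x _ => ?_
    simp only [eq_iff_iff]
    constructor
    · rintro (⟨hx1, hx2⟩ | ⟨hx1, hx2⟩)
      · exact ⟨hx1, hx2.trans h2⟩
      · exact ⟨h1.trans_lt hx1, hx2⟩
    · rintro ⟨hx1, hx2⟩
      by_cases hm : x ≤ m
      · exact Or.inl ⟨hx1, hm⟩
      · exact Or.inr ⟨not_le.1 hm, hx2⟩
  have hz' : @Multiset.countP _ (fun x => (a < x ∧ x ≤ m) ∧ (m < x ∧ x ≤ b))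
      (fun x => instDecidableAnd) S = 0 := (countP_bridge _ _ _ S).trans hz
  have hbr : @Multiset.countP _ (fun x => (a < x ∧ x ≤ m) ∨ (m < x ∧ x ≤ b))
        (fun x => instDecidableOr) S
      = S.countP (fun x => (a < x ∧ x ≤ m) ∨ (m < x ∧ x ≤ b)) :=
    countP_bridge _ _ _ S
  omega


/- Step 1 of the decomposition theorem: interval selection.  The disjoint closed
intervals are `V r = [v r, w r]`, `r = 0, …, K`. -/
open scoped Classical in
theorem interval_selection (K L : ℕ) (hK : 1 ≤ K) (hL : 1 ≤ L)
    (S : Multiset ℝ) (hS : ∀ x ∈ S, x ∈ Set.Ioo (0 : ℝ) 1) :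
    ∃ v w : Fin (K + 1) → ℝ,
      v 0 = 0 ∧ w (Fin.last K) = 1 ∧
      (∀ r, v r ≤ w r) ∧
      -- (i) the intervals are separated by at least 1/(K(L+1))
      (∀ r s : Fin (K + 1), r < s → w r + 1 / (K * (L + 1)) ≤ v s) ∧
      -- (ii) each interval has diameter at most 2/K - 2/(K(L+1))
      (∀ r, w r - v r ≤ 2 / K - 2 / (K * (L + 1))) ∧
      -- (iii) at least L/(L+1) of the points of S lie in the union of the intervals
      L * Multiset.card S ≤
        (L + 1) * Multiset.countP (fun x => ∃ r, v r ≤ x ∧ x ≤ w r) S := by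
  classical
  set M := L + 1 with hMdef
  have hM : 2 ≤ M := by omega
  have hKM : 0 < K * M := Nat.mul_pos hK (by omega)
  have hKMR : (0:ℝ) < ((K * M : ℕ) : ℝ) := by exact_mod_cast hKM
  set δ : ℝ := ((K * M : ℕ) : ℝ)⁻¹ with hδdef
  have hδpos : 0 < δ := inv_pos.2 hKMR
  have hone : ((K * M : ℕ) : ℝ) * δ = 1 := mul_inv_cancel₀ (ne_of_gt hKMR)
  have hδeq : 1 / ((K:ℝ) * ((L:ℝ) + 1)) = δ := by
    rw [hδdef, one_div]
    congr 1
    push_cast [hMdef]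
    ring
  have hmul : ∀ {a b : ℕ}, a ≤ b → (a:ℝ) * δ ≤ (b:ℝ) * δ := fun h =>
    mul_le_mul_of_nonneg_right (by exact_mod_cast h) hδpos.le
  -- the counts of S in each of the K*M half-open pieces
  set c : ℕ → ℕ := fun i => S.countP (fun x => (i:ℝ) * δ < x ∧ x ≤ (i:ℝ) * δ + δ) with hcdef
  have hex : ∀ r : ℕ, ∃ j, j < M ∧ ∀ j', j' < M → c (r * M + j) ≤ c (r * M + j') := by
    intro r
    obtain ⟨j, hj, hmin⟩ := Finset.exists_min_image (Finset.range M)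
      (fun j => c (r * M + j)) ⟨0, Finset.mem_range.2 (by omega)⟩
    exact ⟨j, Finset.mem_range.1 hj, fun j' hj' => hmin j' (Finset.mem_range.2 hj')⟩
  choose g hg hgmin using hex
  set W : ℕ → ℕ := fun r => r * M + g r with hWdef
  have hF1 : ∀ r : ℕ, r * M ≤ W r := fun r => Nat.le_add_right _ _
  have hF2 : ∀ r : ℕ, W r + 1 ≤ (r + 1) * M := by
    intro r
    have h := hg r
    calc W r + 1 = r * M + (g r + 1) := by rw [hWdef]; ring
      _ ≤ r * M + M := Nat.add_le_add_left (by omega) _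
      _ = (r + 1) * M := (Nat.succ_mul r M).symm
  have hF3 : ∀ a b : ℕ, a < b → W a + 1 ≤ W b := fun a b h =>
    (hF2 a).trans ((mul_le_mul_left h M).trans (hF1 b))
  have hF3' : ∀ a b : ℕ, a ≤ b → W a ≤ W b := by
    intro a b h
    rcases eq_or_lt_of_le h with rfl | h'
    · exact le_rfl
    · exact Nat.le_of_succ_le (hF3 a b h')
  set w : Fin (K + 1) → ℝ := fun r => if (r:ℕ) < K then ((W (r:ℕ) : ℕ) : ℝ) * δ else 1
    with hwdef
  set v : Fin (K + 1) → ℝ := fun r =>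
      if (r:ℕ) = 0 then 0 else ((W ((r:ℕ) - 1) + 1 : ℕ) : ℝ) * δ with hvdef
  refine ⟨v, w, ?_, ?_, ?_, ?_, ?_, ?_⟩
  · simp [hvdef]
  · simp [hwdef]
  · -- v r ≤ w r
    intro r
    by_cases h0 : (r:ℕ) = 0
    · have hrK : (r:ℕ) < K := by omega
      simp only [hvdef, hwdef, h0, if_true, if_pos hrK]
      positivity
    · have hr1 : 1 ≤ (r:ℕ) := by omega
      by_cases h1 : (r:ℕ) < K
      · simp only [hvdef, hwdef, if_neg h0, if_pos h1]
        refine hmul ?_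
        rcases eq_or_lt_of_le (show (r:ℕ) - 1 ≤ (r:ℕ) by omega) with heq | hlt
        · omega
        · exact hF3 _ _ hlt
      · simp only [hvdef, hwdef, if_neg h0, if_neg h1]
        have hrK : (r:ℕ) = K := by have := r.isLt; omega
        rw [← hone]
        refine hmul ?_
        have := hF2 ((r:ℕ) - 1)
        have heq : (r:ℕ) - 1 + 1 = K := by omega
        rw [heq] at this
        exact this
  · -- separation
    intro r s hrs
    rw [hδeq]
    have hlt : (r:ℕ) < (s:ℕ) := hrs
    have hsK : (s:ℕ) ≤ K := by have := s.isLt; omega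
    have hrK : (r:ℕ) < K := by omega
    have hs0 : (s:ℕ) ≠ 0 := by omega
    simp only [hvdef, hwdef, if_pos hrK, if_neg hs0]
    have hWle : W (r:ℕ) ≤ W ((s:ℕ) - 1) := hF3' _ _ (by omega)
    have : ((W (r:ℕ) + 1 : ℕ) : ℝ) * δ ≤ ((W ((s:ℕ) - 1) + 1 : ℕ) : ℝ) * δ := hmul (by omega)
    push_cast at this ⊢
    linarith
  · -- diameter
    intro r
    have hrhs : (2:ℝ) / K - 2 / ((K:ℝ) * ((L:ℝ) + 1)) = ((2 * L : ℕ) : ℝ) * δ := by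
      have hK0 : (K:ℝ) ≠ 0 := by positivity
      have hL0 : ((L:ℝ) + 1) ≠ 0 := by positivity
      rw [hδdef]
      push_cast [hMdef]
      field_simp
      ring
    rw [hrhs]
    have hsub : ∀ a b : ℕ, a ≤ b + 2 * L →
        (a:ℝ) * δ - (b:ℝ) * δ ≤ ((2 * L : ℕ) : ℝ) * δ := by
      intro a b h
      rw [← sub_mul]
      refine mul_le_mul_of_nonneg_right ?_ hδpos.le
      have : (a:ℝ) ≤ (b:ℝ) + 2 * L := by exact_mod_cast h
      push_cast
      linarith
    by_cases h0 : (r:ℕ) = 0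
    · have hrK : (r:ℕ) < K := by omega
      simp only [hvdef, hwdef, h0, if_true, if_pos hrK]
      have : W 0 ≤ 0 + 2 * L := by
        have := hg 0
        simp only [hWdef, Nat.zero_mul, Nat.zero_add]
        omega
      simpa using hsub (W 0) 0 this
    · obtain ⟨t, ht⟩ : ∃ t, (r:ℕ) = t + 1 := ⟨(r:ℕ) - 1, by omega⟩
      by_cases h1 : (r:ℕ) < K
      · simp only [hvdef, hwdef, if_neg h0, if_pos h1, ht]
        refine hsub _ _ ?_
        have e : (t + 1) * M = t * M + M := Nat.succ_mul t M
        have h2 := hg (t + 1)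
        have h3 := hg t
        simp only [hWdef, Nat.add_sub_cancel, e]
        have : t * M + M + g (t + 1) ≤ t * M + g t + 1 + 2 * L := by
          have : M + g (t + 1) ≤ g t + 1 + 2 * L := by omega
          omega
        omega
      · simp only [hvdef, hwdef, if_neg h0, if_neg h1, ht]
        have hrK : t + 1 = K := by have := r.isLt; omega
        rw [← hone]
        refine hsub _ _ ?_
        have e : K * M = t * M + M := by rw [← hrK]; exact Nat.succ_mul t M
        have h3 := hg t
        simp only [hWdef, Nat.add_sub_cancel, e]
        omega
  · -- the counting estimate
    set P : ℝ → Prop := fun x => ∃ r : Fin (K + 1), v r ≤ x ∧ x ≤ w r with hPdef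
    -- every point of S not covered by the intervals lies in one of the removed pieces
    have hmemP : ∀ x ∈ S, ¬ P x →
        ∃ r < K, ((W r : ℕ) : ℝ) * δ < x ∧ x ≤ (((W r : ℕ)) : ℝ) * δ + δ := by
      intro x hx hnx
      obtain ⟨hx0, hx1⟩ := hS x hx
      set n := ⌈x * ((K * M : ℕ) : ℝ)⌉₊ with hn
      have hn1 : 1 ≤ n := Nat.ceil_pos.2 (by positivity)
      have hnKM : n ≤ K * M := Nat.ceil_le.2 (by nlinarith)
      have hup : x ≤ (n : ℝ) * δ := by
        have h := Nat.le_ceil (x * ((K * M : ℕ) : ℝ))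
        calc x = x * ((K * M : ℕ) : ℝ) * δ := by rw [mul_assoc, hone, mul_one]
          _ ≤ (n : ℝ) * δ := mul_le_mul_of_nonneg_right h hδpos.le
      have hlow : ((n - 1 : ℕ) : ℝ) * δ < x := by
        have h := Nat.ceil_lt_add_one (le_of_lt (mul_pos hx0 hKMR))
        have h2 : ((n - 1 : ℕ) : ℝ) < x * ((K * M : ℕ) : ℝ) := by
          rw [Nat.cast_sub hn1, Nat.cast_one, hn]
          linarith
        calc ((n - 1 : ℕ) : ℝ) * δ < x * ((K * M : ℕ) : ℝ) * δ :=
              mul_lt_mul_of_pos_right h2 hδpos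
          _ = x := by rw [mul_assoc, hone, mul_one]
      obtain ⟨i, hi⟩ : ∃ i, i = n - 1 := ⟨n - 1, rfl⟩
      rw [← hi] at hlow
      have hiKM : i < K * M := by omega
      obtain ⟨r, j, hjM, hij, hrK⟩ : ∃ r j, j < M ∧ r * M + j = i ∧ r < K :=
        ⟨i / M, i % M, Nat.mod_lt _ (by omega),
          by rw [mul_comm]; exact Nat.div_add_mod i M,
          (Nat.div_lt_iff_lt_mul (show 0 < M by omega)).2 hiKM⟩
      have hi1 : i + 1 = n := by omega
      have hstep : ∀ a : ℕ, ((a : ℝ) + 1) * δ = ((a + 1 : ℕ) : ℝ) * δ := by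
        intro a; push_cast; ring
      rcases lt_trichotomy j (g r) with hlt | heq | hgt
      · exfalso
        apply hnx
        refine ⟨⟨r, by omega⟩, ?_, ?_⟩
        · show v ⟨r, by omega⟩ ≤ x
          by_cases hr0 : r = 0
          · have hv0 : v ⟨r, by omega⟩ = 0 := by simp [hvdef, hr0]
            rw [hv0]
            exact hx0.le
          · simp only [hvdef, Fin.val_mk, if_neg hr0]
            have h2 : W (r - 1) + 1 ≤ i := by
              have h3 := hF2 (r - 1)
              have h4 : (r - 1 + 1) * M = r * M := by
                have : r - 1 + 1 = r := by omega
                rw [this]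
              rw [h4] at h3
              omega
            exact (hmul h2).trans hlow.le
        · show x ≤ w ⟨r, by omega⟩
          simp only [hwdef, Fin.val_mk, if_pos hrK]
          refine hup.trans (hmul ?_)
          have : W r = r * M + g r := rfl
          omega
      · refine ⟨r, hrK, ?_, ?_⟩
        · have hWi : W r = i := by
            have : W r = r * M + g r := rfl
            omega
          rw [hWi]
          exact hlow
        · have hWi : W r = i := by
            have : W r = r * M + g r := rfl
            omega
          rw [hWi]
          have : ((i : ℝ)) * δ + δ = ((i + 1 : ℕ) : ℝ) * δ := by push_cast; ring
          rw [this, hi1]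
          exact hup
      · exfalso
        apply hnx
        refine ⟨⟨r + 1, by omega⟩, ?_, ?_⟩
        · show v ⟨r + 1, by omega⟩ ≤ x
          simp only [hvdef, Fin.val_mk, if_neg (Nat.succ_ne_zero r), Nat.add_sub_cancel]
          have h2 : W r + 1 ≤ i := by
            have : W r = r * M + g r := rfl
            omega
          exact (hmul h2).trans hlow.le
        · show x ≤ w ⟨r + 1, by omega⟩
          by_cases hr1K : r + 1 < K
          · simp only [hwdef, Fin.val_mk, if_pos hr1K]
            refine hup.trans (hmul ?_)
            have h3 := hF1 (r + 1)
            have h4 : (r + 1) * M = r * M + M := Nat.succ_mul r M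
            omega
          · simp only [hwdef, Fin.val_mk, if_neg hr1K]
            exact hx1.le
    -- split the count of S into covered and uncovered points
    have hsplit : S.countP P + S.countP (fun x => ¬ P x) = Multiset.card S := by
      have h := congrArg Multiset.card (Multiset.filter_add_not P S)
      simpa [← Multiset.countP_eq_card_filter] using h
    -- the uncovered points are at most the total count of the removed pieces
    have hgap : S.countP (fun x => ¬ P x) ≤ ∑ r ∈ Finset.range K, c (W r) := by
      have h1 : S.countP (fun x => ¬ P x) ≤
          S.countP (fun x => ∃ r < K, ((W r : ℕ) : ℝ) * δ < x ∧ x ≤ ((W r : ℕ) : ℝ) * δ + δ) :=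
        countP_imp_le _ _ S hmemP
      have h2 := countP_exists_le
        (fun r x => ((W r : ℕ) : ℝ) * δ < x ∧ x ≤ ((W r : ℕ) : ℝ) * δ + δ) S K
      refine le_trans (le_trans h1 (le_of_eq (countP_bridge _ _ _ S)))
        (le_trans h2 (le_of_eq ?_))
      exact Finset.sum_congr rfl fun r _ => countP_bridge _ _ _ S
    -- in each block the removed piece has at most the average count
    have hminsum : ∀ r ∈ Finset.range K, M * c (W r) ≤ ∑ j ∈ Finset.range M, c (r * M + j) := by
      intro r _
      have h := Finset.card_nsmul_le_sum (Finset.range M) (fun j => c (r * M + j)) (c (W r))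
        (fun j hj => hgmin r j (Finset.mem_range.1 hj))
      simpa [Finset.card_range, smul_eq_mul] using h
    -- total count over all pieces
    have hsumc : ∀ n : ℕ, ∑ i ∈ Finset.range n, c i
        = S.countP (fun x => 0 < x ∧ x ≤ (n : ℝ) * δ) := by
      intro n
      induction n with
      | zero =>
        simp only [Finset.range_zero, Finset.sum_empty, Nat.cast_zero, zero_mul]
        symm
        rw [Multiset.countP_eq_zero]
        rintro x _ ⟨h1, h2⟩
        linarith
      | succ n ih =>
        rw [Finset.sum_range_succ, ih]
        have h0 : (0:ℝ) ≤ (n : ℝ) * δ := by positivity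
        have h1 : (n : ℝ) * δ ≤ (n : ℝ) * δ + δ := by linarith
        have hsp := countP_split S 0 ((n : ℝ) * δ) ((n : ℝ) * δ + δ) h0 h1
        have hcast : ((n + 1 : ℕ) : ℝ) * δ = (n : ℝ) * δ + δ := by push_cast; ring
        simp only [hcast]
        rw [hsp]
    have htot : ∑ i ∈ Finset.range (K * M), c i = Multiset.card S := by
      rw [hsumc (K * M)]
      calc S.countP (fun x => 0 < x ∧ x ≤ ((K * M : ℕ) : ℝ) * δ)
          = S.countP (fun _ => True) := by
            refine Multiset.countP_congr rfl fun x hx => ?_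
            simp only [eq_iff_iff, iff_true, hone]
            exact ⟨(hS x hx).1, (hS x hx).2.le⟩
        _ = Multiset.card S := Multiset.countP_True
    have hblocks : ∀ n : ℕ, ∑ i ∈ Finset.range (n * M), c i
        = ∑ r ∈ Finset.range n, ∑ j ∈ Finset.range M, c (r * M + j) := by
      intro n
      induction n with
      | zero => simp
      | succ n ih => rw [Finset.sum_range_succ, ← ih, Nat.succ_mul, Finset.sum_range_add]
    have hMB : M * S.countP (fun x => ¬ P x) ≤ Multiset.card S := by
      calc M * S.countP (fun x => ¬ P x) ≤ M * ∑ r ∈ Finset.range K, c (W r) :=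
            Nat.mul_le_mul_left M hgap
        _ = ∑ r ∈ Finset.range K, M * c (W r) := Finset.mul_sum _ _ _
        _ ≤ ∑ r ∈ Finset.range K, ∑ j ∈ Finset.range M, c (r * M + j) :=
            Finset.sum_le_sum hminsum
        _ = ∑ i ∈ Finset.range (K * M), c i := (hblocks K).symm
        _ = Multiset.card S := htot
    have h3 : L * S.countP (fun x => ¬ P x) ≤ S.countP P := by
      have h2 : L * S.countP (fun x => ¬ P x) + S.countP (fun x => ¬ P x)
          ≤ S.countP P + S.countP (fun x => ¬ P x) := by
        have he : L * S.countP (fun x => ¬ P x) + S.countP (fun x => ¬ P x)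
            = M * S.countP (fun x => ¬ P x) := by rw [hMdef]; ring
        rw [he, hsplit]
        exact hMB
      omega
    calc L * Multiset.card S
        = L * S.countP P + L * S.countP (fun x => ¬ P x) := by rw [← hsplit]; ring
      _ ≤ L * S.countP P + S.countP P := Nat.add_le_add_left h3 _
      _ = M * S.countP P := by rw [hMdef]; ring
end

section
/- In the special case X = [0,1] (dimension 1) with k' = k + 1: given an open cover 𝒲 of [0,1] and for each W ∈ 𝒲 a continuous projection-valued map p_W : W → M_n(ℂ) with rank p_W(x) ≥ k + 1, there is a continuous projection-valued map p : [0,1] → M_n(ℂ) with rank p(x) ≥ k and p(x) ≤ ⋁{p_W(x) : x ∈ W ∈ 𝒲} for all x. -/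
set_option maxHeartbeats 1600000

namespace SelP

open Matrix Set

variable {a b n k : ℕ}

/-- Entrywise ℓ¹-type size of a matrix. -/
noncomputable def ent (A : Matrix (Fin a) (Fin b) ℂ) : ℝ := ∑ i, ∑ j, ‖A i j‖

lemma ent_nonneg (A : Matrix (Fin a) (Fin b) ℂ) : 0 ≤ ent A :=
  Finset.sum_nonneg fun _ _ => Finset.sum_nonneg fun _ _ => norm_nonneg _

lemma norm_mulVec_le (A : Matrix (Fin a) (Fin b) ℂ) (v : Fin b → ℂ) :
    ‖A.mulVec v‖ ≤ ent A * ‖v‖ := by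
  rcases Nat.eq_zero_or_pos a with ha | ha
  · have : A.mulVec v = 0 := by
      funext i; exact absurd i.2 (by omega)
    rw [this, norm_zero]
    exact mul_nonneg (ent_nonneg A) (norm_nonneg v)
  · rw [pi_norm_le_iff_of_nonneg (mul_nonneg (ent_nonneg A) (norm_nonneg v))]
    intro i
    calc ‖A.mulVec v i‖ = ‖∑ j, A i j * v j‖ := by rw [Matrix.mulVec, dotProduct]
      _ ≤ ∑ j, ‖A i j * v j‖ := norm_sum_le _ _
      _ ≤ ∑ j, ‖A i j‖ * ‖v‖ := by
          refine Finset.sum_le_sum fun j _ => ?_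
          rw [norm_mul]
          exact mul_le_mul_of_nonneg_left (norm_le_pi_norm v j) (norm_nonneg _)
      _ = (∑ j, ‖A i j‖) * ‖v‖ := by rw [Finset.sum_mul]
      _ ≤ ent A * ‖v‖ := by
          refine mul_le_mul_of_nonneg_right ?_ (norm_nonneg v)
          exact Finset.single_le_sum (f := fun i => ∑ j, ‖A i j‖)
            (fun i _ => Finset.sum_nonneg fun _ _ => norm_nonneg _) (Finset.mem_univ i)

lemma ent_add_le (A B : Matrix (Fin a) (Fin b) ℂ) : ent (A + B) ≤ ent A + ent B := by
  rw [ent, ent, ent, ← Finset.sum_add_distrib]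
  refine Finset.sum_le_sum fun i _ => ?_
  rw [← Finset.sum_add_distrib]
  exact Finset.sum_le_sum fun j _ => norm_add_le _ _

lemma mulVec_injective_iff {A : Matrix (Fin a) (Fin b) ℂ} :
    Function.Injective A.mulVec ↔ ∀ v, A.mulVec v = 0 → v = 0 := by
  constructor
  · intro h v hv
    apply h
    rw [hv, Matrix.mulVec_zero]
  · intro h u v huv
    have : A.mulVec (u - v) = 0 := by
      rw [Matrix.mulVec_sub, huv, sub_self]
    have := h _ this
    exact sub_eq_zero.mp this

open scoped ComplexOrder in
lemma isUnit_det_conjTranspose_mul_self {F : Matrix (Fin n) (Fin k) ℂ}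
    (hF : Function.Injective F.mulVec) : IsUnit (Fᴴ * F).det := by
  rw [isUnit_iff_ne_zero]
  intro h
  obtain ⟨v, hv, hv0⟩ := Matrix.exists_mulVec_eq_zero_iff.2 h
  exact hv (mulVec_injective_iff.1 hF v
    ((Matrix.conjTranspose_mul_self_mulVec_eq_zero F v).1 hv0))

/-- Orthogonal projection onto the column space of an injective frame. -/
noncomputable def projOf (F : Matrix (Fin n) (Fin k) ℂ) : Matrix (Fin n) (Fin n) ℂ :=
  F * (Fᴴ * F)⁻¹ * Fᴴ

lemma projOf_mul_self {F : Matrix (Fin n) (Fin k) ℂ} (hF : Function.Injective F.mulVec) :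
    projOf F * F = F := by
  have h := isUnit_det_conjTranspose_mul_self hF
  rw [projOf, Matrix.mul_assoc, Matrix.mul_assoc, Matrix.nonsing_inv_mul _ h, Matrix.mul_one]

lemma projOf_idem {F : Matrix (Fin n) (Fin k) ℂ} (hF : Function.Injective F.mulVec) :
    IsIdempotentElem (projOf F) := by
  have h := isUnit_det_conjTranspose_mul_self hF
  show projOf F * projOf F = projOf F
  rw [projOf]
  calc F * (Fᴴ * F)⁻¹ * Fᴴ * (F * (Fᴴ * F)⁻¹ * Fᴴ)
      = F * (Fᴴ * F)⁻¹ * ((Fᴴ * F) * (Fᴴ * F)⁻¹) * Fᴴ := by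
        simp only [Matrix.mul_assoc]
    _ = F * (Fᴴ * F)⁻¹ * Fᴴ := by rw [Matrix.mul_nonsing_inv _ h, Matrix.mul_one]

lemma projOf_selfAdjoint (F : Matrix (Fin n) (Fin k) ℂ) : IsSelfAdjoint (projOf F) := by
  show star (projOf F) = projOf F
  rw [Matrix.star_eq_conjTranspose, projOf, Matrix.conjTranspose_mul, Matrix.conjTranspose_mul,
    Matrix.conjTranspose_conjTranspose, Matrix.conjTranspose_nonsing_inv,
    Matrix.conjTranspose_mul, Matrix.conjTranspose_conjTranspose, Matrix.mul_assoc]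

lemma rank_projOf {F : Matrix (Fin n) (Fin k) ℂ} (hF : Function.Injective F.mulVec) :
    k ≤ (projOf F).rank := by
  have h := isUnit_det_conjTranspose_mul_self hF
  have h1 : (Fᴴ * F).rank = k := by
    rw [Matrix.rank_of_isUnit _ ((Matrix.isUnit_iff_isUnit_det _).2 h), Fintype.card_fin]
  have h2 : (Fᴴ * F).rank ≤ F.rank := Matrix.rank_mul_le_right _ _
  have h3 : F.rank ≤ (projOf F).rank := by
    conv_lhs => rw [← projOf_mul_self hF]
    exact Matrix.rank_mul_le_left _ _
  omega

lemma range_projOf {F : Matrix (Fin n) (Fin k) ℂ} :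
    LinearMap.range (projOf F).mulVecLin ≤ LinearMap.range F.mulVecLin := by
  rw [projOf, Matrix.mul_assoc, Matrix.mulVecLin_mul]
  exact LinearMap.range_comp_le_range _ _

lemma range_le_of_mul_eq {q : Matrix (Fin n) (Fin n) ℂ} {M : Matrix (Fin n) (Fin k) ℂ}
    (h : q * M = M) : LinearMap.range M.mulVecLin ≤ LinearMap.range q.mulVecLin := by
  rintro - ⟨v, rfl⟩
  exact ⟨M.mulVec v, by rw [Matrix.mulVecLin_apply, Matrix.mulVecLin_apply, Matrix.mulVec_mulVec, h]⟩

lemma continuous_projOf {X : Type*} [TopologicalSpace X] {F : X → Matrix (Fin n) (Fin k) ℂ}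
    (hF : Continuous F) (hinj : ∀ x, Function.Injective (F x).mulVec) :
    Continuous fun x => projOf (F x) := by
  have hG : Continuous fun x => (F x)ᴴ * F x := (hF.matrix_conjTranspose).matrix_mul hF
  have hdet : ∀ x, ((F x)ᴴ * F x).det ≠ 0 := fun x =>
    (isUnit_det_conjTranspose_mul_self (hinj x)).ne_zero
  have hinv : Continuous fun x => ((F x)ᴴ * F x)⁻¹ := by
    simp only [Matrix.inv_def, Ring.inverse_eq_inv']
    exact (hG.matrix_det.inv₀ hdet).smul hG.matrix_adjugate
  exact (hF.matrix_mul hinv).matrix_mul hF.matrix_conjTranspose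

lemma exists_frame {q : Matrix (Fin n) (Fin n) ℂ} (hidem : IsIdempotentElem q)
    (hrank : k ≤ q.rank) : ∃ H : Matrix (Fin n) (Fin k) ℂ,
    Function.Injective H.mulVec ∧ q * H = H := by
  have hr : k ≤ Module.finrank ℂ (LinearMap.range q.mulVecLin) := hrank
  obtain ⟨f, hf⟩ := exists_linearIndependent_of_le_finrank hr
  have hli : LinearIndependent ℂ fun c => ((f c : Fin n → ℂ)) := by
    have := hf.map' (Submodule.subtype _) (Submodule.ker_subtype _)
    exact this
  refine ⟨Matrix.of fun r c => (f c : Fin n → ℂ) r, ?_, ?_⟩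
  · rw [mulVec_injective_iff]
    intro u hu
    have hsum : ∑ c, u c • ((f c : Fin n → ℂ)) = 0 := by
      funext r
      have := congrFun hu r
      simpa [Matrix.mulVec, dotProduct, mul_comm, Finset.sum_apply] using this
    funext c
    exact Fintype.linearIndependent_iff.1 hli u hsum c
  · ext r c
    have hmem : (f c : Fin n → ℂ) ∈ LinearMap.range q.mulVecLin := (f c).2
    obtain ⟨w, hw⟩ := hmem
    have hfix : q.mulVec (f c : Fin n → ℂ) = (f c : Fin n → ℂ) := by
      rw [← hw, Matrix.mulVecLin_apply, Matrix.mulVec_mulVec, hidem]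
    calc (q * Matrix.of fun r c => (f c : Fin n → ℂ) r) r c
        = ∑ s, q r s * (f c : Fin n → ℂ) s := by rw [Matrix.mul_apply]; rfl
      _ = q.mulVec (f c : Fin n → ℂ) r := rfl
      _ = (f c : Fin n → ℂ) r := by rw [hfix]

lemma ent_neg (A : Matrix (Fin a) (Fin b) ℂ) : ent (-A) = ent A := by
  simp [ent]

lemma continuous_ent : Continuous (ent (a := a) (b := b)) := by
  refine continuous_finset_sum _ fun i _ => continuous_finset_sum _ fun j _ => ?_
  exact ((continuous_apply j).comp (continuous_apply i)).norm

end SelP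

namespace SelP
open Matrix Set

section Ctx

abbrev X : Type := ↥(Set.Icc (0:ℝ) 1)

variable {n k : ℕ} {ι : Type*} (W : ι → Set X) (pW : ι → X → Matrix (Fin n) (Fin n) ℂ)

/-- The pointwise join of the ranges of the locally defined projections. -/
noncomputable def Jn (x : X) : Submodule ℂ (Fin n → ℂ) :=
  ⨆ i ∈ {i | x ∈ W i}, LinearMap.range (pW i x).mulVecLin

lemma le_Jn {i : ι} {x : X} (hx : x ∈ W i) :
    LinearMap.range (pW i x).mulVecLin ≤ Jn W pW x :=
  le_iSup₂ (f := fun i (_ : x ∈ W i) => LinearMap.range (pW i x).mulVecLin) i hx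

lemma range_mul_le (A : Matrix (Fin n) (Fin n) ℂ) (B : Matrix (Fin n) (Fin k) ℂ) :
    LinearMap.range (A * B).mulVecLin ≤ LinearMap.range A.mulVecLin := by
  rw [Matrix.mulVecLin_mul]; exact LinearMap.range_comp_le_range _ _

/-- `good a b Fa Fb`: there is a continuous field of injective `n×k` frames on `[a,b]`,
with ranges dominated by the join, interpolating `Fa` and `Fb`. -/
def good (a b : X) (Fa Fb : Matrix (Fin n) (Fin k) ℂ) : Prop :=
  ∃ F : X → Matrix (Fin n) (Fin k) ℂ, ContinuousOn F (Icc a b) ∧ F a = Fa ∧ F b = Fb ∧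
    ∀ x ∈ Icc a b, Function.Injective (F x).mulVec ∧
      LinearMap.range (F x).mulVecLin ≤ Jn W pW x

lemma good_trans {a b c : X} {Fa Fb Fc : Matrix (Fin n) (Fin k) ℂ}
    (hab : a ≤ b) (hbc : b ≤ c)
    (h1 : good W pW a b Fa Fb) (h2 : good W pW b c Fb Fc) : good W pW a c Fa Fc := by
  classical
  obtain ⟨F1, hF1c, hF1a, hF1b, hF1p⟩ := h1
  obtain ⟨F2, hF2c, hF2b, hF2c', hF2p⟩ := h2
  refine ⟨fun x => if x ≤ b then F1 x else F2 x, ?_, ?_, ?_, ?_⟩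
  · apply ContinuousOn.if
    · intro x hx
      have : x = b := by
        have h := hx.2
        have : frontier {y : X | y ≤ b} ⊆ {y | y = b} := by
          simpa [Set.Iic] using frontier_Iic_subset (α := X) b
        exact this h
      subst this
      rw [hF1b, hF2b]
    · refine hF1c.mono ?_
      intro x hx
      have h2 : x ∈ closure {y : X | y ≤ b} := hx.2
      rw [show {y : X | y ≤ b} = Iic b from rfl, isClosed_Iic.closure_eq] at h2
      exact ⟨hx.1.1, h2⟩
    · refine hF2c.mono ?_
      intro x hx
      have h2 : x ∈ closure {y : X | ¬ y ≤ b} := hx.2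
      have hsub : closure {y : X | ¬ y ≤ b} ⊆ Ici b :=
        closure_minimal (fun y hy => le_of_lt (not_le.1 hy)) isClosed_Ici
      exact ⟨hsub h2, hx.1.2⟩
  · show (if a ≤ b then F1 a else F2 a) = Fa
    rw [if_pos hab, hF1a]
  · by_cases h : c ≤ b
    · have : b = c := le_antisymm hbc h
      subst this
      show (if b ≤ b then F1 b else F2 b) = Fc
      rw [if_pos le_rfl, hF1b, ← hF2b, hF2c']
    · show (if c ≤ b then F1 c else F2 c) = Fc
      rw [if_neg h, hF2c']
  · intro x hx
    by_cases h : x ≤ b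
    · simpa [if_pos h] using hF1p x ⟨hx.1, h⟩
    · simpa [if_neg h] using hF2p x ⟨le_of_lt (not_le.1 h), hx.2⟩

/-- Chaining step: on an interval where `pW i` moves by at most `1/2`, multiply the
incoming frame by the moving projection. -/
lemma step0 {a b : X} {i : ι} {Fa : Matrix (Fin n) (Fin k) ℂ}
    (hpWcont : ∀ i, ContinuousOn (pW i) (W i))
    (hpWproj : ∀ i, ∀ x ∈ W i, IsIdempotentElem (pW i x) ∧ IsSelfAdjoint (pW i x))
    (hab : a ≤ b) (h1 : Icc a b ⊆ W i)
    (hosc : ∀ x ∈ Icc a b, ent (pW i x - pW i a) ≤ 1/2)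
    (hinj : Function.Injective Fa.mulVec) (hfix : pW i a * Fa = Fa) :
    good W pW a b Fa (pW i b * Fa) ∧ pW i b * (pW i b * Fa) = pW i b * Fa ∧
      Function.Injective (pW i b * Fa).mulVec := by
  have hb : b ∈ Icc a b := ⟨hab, le_rfl⟩
  have key : ∀ x ∈ Icc a b, Function.Injective (pW i x * Fa).mulVec := by
    intro x hx
    rw [mulVec_injective_iff]
    intro v hv
    by_contra hv0
    have hFav : Fa.mulVec v ≠ 0 := fun h => hv0 (mulVec_injective_iff.1 hinj v h)
    have hdecomp : pW i x * Fa = Fa + (pW i x - pW i a) * Fa := by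
      rw [Matrix.sub_mul, hfix, add_sub_cancel]
    have : (pW i x * Fa).mulVec v = Fa.mulVec v + (pW i x - pW i a).mulVec (Fa.mulVec v) := by
      rw [hdecomp, Matrix.add_mulVec, Matrix.mulVec_mulVec]
    rw [hv] at this
    have hnorm : ‖Fa.mulVec v‖ ≤ (1/2) * ‖Fa.mulVec v‖ := by
      have h3 : Fa.mulVec v = -((pW i x - pW i a).mulVec (Fa.mulVec v)) :=
        eq_neg_of_add_eq_zero_left this.symm
      have h4 : ‖Fa.mulVec v‖ = ‖(pW i x - pW i a).mulVec (Fa.mulVec v)‖ := by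
        conv_lhs => rw [h3]
        rw [norm_neg]
      have h5 : ‖(pW i x - pW i a).mulVec (Fa.mulVec v)‖ ≤ ent (pW i x - pW i a) * ‖Fa.mulVec v‖ :=
        norm_mulVec_le _ _
      have h6 : ent (pW i x - pW i a) * ‖Fa.mulVec v‖ ≤ (1/2) * ‖Fa.mulVec v‖ :=
        mul_le_mul_of_nonneg_right (hosc x hx) (norm_nonneg _)
      linarith
    have : ‖Fa.mulVec v‖ > 0 := norm_pos_iff.2 hFav
    linarith
  have hidem : ∀ x ∈ Icc a b, pW i x * (pW i x * Fa) = pW i x * Fa := by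
    intro x hx
    rw [← Matrix.mul_assoc, (hpWproj i x (h1 hx)).1]
  refine ⟨⟨fun x => pW i x * Fa, ?_, ?_, rfl, ?_⟩, hidem b hb, key b hb⟩
  · exact (continuous_id.matrix_mul continuous_const).comp_continuousOn
      ((hpWcont i).mono h1)
  · exact hfix
  · intro x hx
    exact ⟨key x hx, le_trans (range_mul_le _ _) (le_Jn W pW (h1 hx))⟩

end Ctx
end SelP

namespace SelP
section Ctx2
open Matrix Set
variable {n k : ℕ} {ι : Type*} (W : ι → Set X) (pW : ι → X → Matrix (Fin n) (Fin n) ℂ)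

lemma inj_of_det_ne {k n : ℕ} {L : Matrix (Fin k) (Fin n) ℂ} {M : Matrix (Fin n) (Fin k) ℂ}
    (h : (L * M).det ≠ 0) : Function.Injective M.mulVec := by
  rw [mulVec_injective_iff]
  intro v hv
  by_contra hv0
  exact h (Matrix.exists_mulVec_eq_zero_iff.1
    ⟨v, hv0, by rw [← Matrix.mulVec_mulVec, hv, Matrix.mulVec_zero]⟩)

set_option maxHeartbeats 1600000 in
lemma step2 (hWopen : ∀ i, IsOpen (W i))
    (hpWcont : ∀ i, ContinuousOn (pW i) (W i))
    (hpWproj : ∀ i, ∀ x ∈ W i, IsIdempotentElem (pW i x) ∧ IsSelfAdjoint (pW i x))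
    (hpWrank : ∀ i, ∀ x ∈ W i, k + 1 ≤ (pW i x).rank) (hk : 1 ≤ k)
    {a b : X} {i i' : ι} {Fa : Matrix (Fin n) (Fin k) ℂ}
    (hab : a < b) (hai : a ∈ W i) (hai' : a ∈ W i')
    (hinj : Function.Injective Fa.mulVec) (hfix : pW i a * Fa = Fa) :
    ∃ (c : X) (Fc : Matrix (Fin n) (Fin k) ℂ), a < c ∧ c ≤ b ∧ c ∈ W i' ∧
      good W pW a c Fa Fc ∧ Function.Injective Fc.mulVec ∧ pW i' c * Fc = Fc := by
  classical
  -- a target frame inside the range of `pW i'` at `a`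
  obtain ⟨H, hHinj, hHfix⟩ := exists_frame (hpWproj i' a hai').1
    (le_trans (Nat.le_succ k) (hpWrank i' a hai'))
  -- the complex pencil of frames
  set Φ : ℂ → Matrix (Fin n) (Fin k) ℂ := fun w => (1 - w) • Fa + w • H with hΦdef
  have hΦ0 : Φ 0 = Fa := by simp [hΦdef]
  have hΦ1 : Φ 1 = H := by simp [hΦdef]
  have hΦaffine : ∀ w, Φ w = Fa + w • (H - Fa) := by
    intro w; simp only [hΦdef]; module
  -- determinant polynomials detecting injectivity
  set polyDet : Matrix (Fin k) (Fin n) ℂ → Polynomial ℂ := fun L =>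
    Matrix.det ((L * Fa).map Polynomial.C + (Polynomial.X : Polynomial ℂ) • ((L * (H - Fa)).map Polynomial.C))
    with hpolyDet
  have hEval : ∀ (L : Matrix (Fin k) (Fin n) ℂ) (z : ℂ), (polyDet L).eval z = (L * Φ z).det := by
    intro L z
    have hmap : (L * Φ z)
        = ((L * Fa).map Polynomial.C + (Polynomial.X : Polynomial ℂ) • ((L * (H - Fa)).map Polynomial.C)).map
            (Polynomial.evalRingHom z) := by
      ext p q
      simp only [hΦaffine, Matrix.mul_add, Matrix.mul_smul, Matrix.map_apply, Matrix.add_apply,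
        Matrix.smul_apply, Polynomial.coe_evalRingHom, Polynomial.eval_add, Polynomial.eval_mul,
        Polynomial.eval_X, Polynomial.eval_C, smul_eq_mul]
    calc (polyDet L).eval z = (Polynomial.evalRingHom z) (polyDet L) := rfl
      _ = (((L * Fa).map Polynomial.C + (Polynomial.X : Polynomial ℂ) • ((L * (H - Fa)).map Polynomial.C)).map
            (Polynomial.evalRingHom z)).det := RingHom.map_det _ _
      _ = (L * Φ z).det := by rw [← hmap]
  have hdet1 : (Faᴴ * Fa).det ≠ 0 := (isUnit_det_conjTranspose_mul_self hinj).ne_zero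
  have hdet2 : (Hᴴ * H).det ≠ 0 := (isUnit_det_conjTranspose_mul_self hHinj).ne_zero
  have hP1ne : polyDet Faᴴ ≠ 0 := by
    intro h
    have := hEval Faᴴ 0
    rw [h, hΦ0] at this
    simp only [Polynomial.eval_zero] at this
    exact hdet1 this.symm
  -- the bad set of parameters
  set B : Set ℂ := {w : ℂ | (polyDet Faᴴ).IsRoot w ∧ (polyDet Hᴴ).IsRoot w} with hBdef
  have hBfin : B.Finite := (Polynomial.finite_setOf_isRoot hP1ne).subset (fun w hw => hw.1)
  have hBinj : ∀ w ∉ B, Function.Injective (Φ w).mulVec := by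
    intro w hw
    rcases not_and_or.1 hw with h | h
    · refine inj_of_det_ne (L := Faᴴ) ?_
      rw [← hEval]; exact h
    · refine inj_of_det_ne (L := Hᴴ) ?_
      rw [← hEval]; exact h
  have h0B : (0:ℂ) ∉ B := by
    intro h
    have h1 := h.1
    rw [Polynomial.IsRoot, hEval, hΦ0] at h1
    exact hdet1 h1
  have h1B : (1:ℂ) ∉ B := by
    intro h
    have h1 := h.2
    rw [Polynomial.IsRoot, hEval, hΦ1] at h1
    exact hdet2 h1
  -- a path from 0 to 1 avoiding the bad set
  have hpc : IsPathConnected Bᶜ :=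
    hBfin.countable.isPathConnected_compl_of_one_lt_rank
      (by rw [Complex.rank_real_complex]; norm_num)
  obtain ⟨γ, hγ⟩ := hpc.joinedIn 0 h0B 1 h1B
  have hΦinjt : ∀ t : unitInterval, Function.Injective (Φ (γ t)).mulVec :=
    fun t => hBinj _ (hγ t)
  -- uniform lower bound on singular values along the path, via explicit inverses
  haveI : Nonempty (Fin k) := ⟨⟨0, hk⟩⟩
  have hΦc : Continuous fun t : unitInterval => Φ (γ t) := by
    have h : Continuous Φ :=
      ((continuous_const.sub continuous_id).smul continuous_const).add
        (continuous_id.smul continuous_const)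
    exact h.comp γ.continuous
  have hdetΦ : ∀ t : unitInterval, ((Φ (γ t))ᴴ * (Φ (γ t))).det ≠ 0 :=
    fun t => (isUnit_det_conjTranspose_mul_self (hΦinjt t)).ne_zero
  set ρ : unitInterval → ℝ := fun t =>
    ent (((Φ (γ t))ᴴ * (Φ (γ t)))⁻¹) * ent ((Φ (γ t))ᴴ) with hρdef
  have hρbound : ∀ (t : unitInterval) (v : Fin k → ℂ),
      ‖v‖ ≤ ρ t * ‖(Φ (γ t)).mulVec v‖ := by
    intro t v
    have hG : IsUnit ((Φ (γ t))ᴴ * (Φ (γ t))).det := isUnit_det_conjTranspose_mul_self (hΦinjt t)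
    have hv : v = (((Φ (γ t))ᴴ * (Φ (γ t)))⁻¹).mulVec
        (((Φ (γ t))ᴴ).mulVec ((Φ (γ t)).mulVec v)) := by
      rw [Matrix.mulVec_mulVec, Matrix.mulVec_mulVec, Matrix.mul_assoc,
        Matrix.nonsing_inv_mul _ hG, Matrix.one_mulVec]
    calc ‖v‖ = ‖(((Φ (γ t))ᴴ * (Φ (γ t)))⁻¹).mulVec
          (((Φ (γ t))ᴴ).mulVec ((Φ (γ t)).mulVec v))‖ := by rw [← hv]
      _ ≤ ent (((Φ (γ t))ᴴ * (Φ (γ t)))⁻¹) * ‖((Φ (γ t))ᴴ).mulVec ((Φ (γ t)).mulVec v)‖ :=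
          norm_mulVec_le _ _
      _ ≤ ent (((Φ (γ t))ᴴ * (Φ (γ t)))⁻¹) * (ent ((Φ (γ t))ᴴ) * ‖(Φ (γ t)).mulVec v‖) :=
          mul_le_mul_of_nonneg_left (norm_mulVec_le _ _) (ent_nonneg _)
      _ = ρ t * ‖(Φ (γ t)).mulVec v‖ := by rw [hρdef]; ring
  have hρcont : Continuous ρ := by
    have hGc : Continuous fun t : unitInterval => (Φ (γ t))ᴴ * Φ (γ t) :=
      hΦc.matrix_conjTranspose.matrix_mul hΦc
    have hinvc : Continuous fun t : unitInterval => ((Φ (γ t))ᴴ * Φ (γ t))⁻¹ := by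
      simp only [Matrix.inv_def, Ring.inverse_eq_inv']
      exact (hGc.matrix_det.inv₀ hdetΦ).smul hGc.matrix_adjugate
    exact (continuous_ent.comp hinvc).mul (continuous_ent.comp hΦc.matrix_conjTranspose)
  obtain ⟨tR, -, hRmax⟩ := isCompact_univ.exists_isMaxOn
    (⟨0, mem_univ _⟩ : (univ : Set unitInterval).Nonempty) hρcont.continuousOn
  set R : ℝ := ρ tR with hRdef
  have hone : ‖(fun _ => (1:ℂ) : Fin k → ℂ)‖ = 1 := by rw [pi_norm_const]; exact norm_one
  have hRpos : 0 < R := by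
    by_contra hR
    push_neg at hR
    have h := hρbound tR (fun _ => 1)
    rw [hone] at h
    have : ρ tR * ‖(Φ (γ tR)).mulVec (fun _ => 1)‖ ≤ 0 :=
      mul_nonpos_of_nonpos_of_nonneg (by rw [← hRdef]; exact hR) (norm_nonneg _)
    linarith
  set σ : ℝ := R⁻¹ with hσdef
  have hσpos : 0 < σ := inv_pos.2 hRpos
  have hσ : ∀ (t : unitInterval) (v : Fin k → ℂ), σ * ‖v‖ ≤ ‖(Φ (γ t)).mulVec v‖ := by
    intro t v
    have h := hρbound t v
    have hle : ρ t ≤ R := isMaxOn_iff.1 hRmax t (mem_univ _)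
    have h2 : ‖v‖ ≤ R * ‖(Φ (γ t)).mulVec v‖ :=
      le_trans h (mul_le_mul_of_nonneg_right hle (norm_nonneg _))
    calc σ * ‖v‖ ≤ σ * (R * ‖(Φ (γ t)).mulVec v‖) :=
        mul_le_mul_of_nonneg_left h2 hσpos.le
      _ = ‖(Φ (γ t)).mulVec v‖ := by
          rw [hσdef]
          field_simp
  -- a bound on the path
  obtain ⟨tZ, -, hZmax⟩ := isCompact_univ.exists_isMaxOn (⟨0, mem_univ _⟩ :
      ∃ x, x ∈ (univ : Set unitInterval))
    ((continuous_norm.comp γ.continuous).continuousOn)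
  set Z : ℝ := ‖(γ tZ : ℂ)‖ with hZdef
  have hZ : ∀ t : unitInterval, ‖(γ t : ℂ)‖ ≤ Z := fun t => isMaxOn_iff.1 hZmax t (mem_univ _)
  have hZ0 : 0 ≤ Z := le_trans (norm_nonneg _) (hZ tZ)
  -- the smallness threshold
  set D : ℝ := (1 + Z) * ent Fa + Z * ent H with hDdef
  have hD0 : 0 ≤ D := by
    rw [hDdef]
    have h1 := ent_nonneg Fa
    have h2 := ent_nonneg H
    nlinarith
  set η : ℝ := σ / (2 * (D + 1)) with hηdef
  have hηpos : 0 < η := by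
    rw [hηdef]
    apply div_pos hσpos
    linarith
  -- find the rotation interval
  have hcA : ContinuousAt (pW i) a := (hpWcont i).continuousAt ((hWopen i).mem_nhds hai)
  have hcA' : ContinuousAt (pW i') a := (hpWcont i').continuousAt ((hWopen i').mem_nhds hai')
  have hentc : ContinuousAt (fun x => ent (pW i x - pW i a)) a :=
    continuous_ent.continuousAt.comp (hcA.sub continuousAt_const)
  have hentc' : ContinuousAt (fun x => ent (pW i' x - pW i' a)) a :=
    continuous_ent.continuousAt.comp (hcA'.sub continuousAt_const)
  have hent0 : ent (pW i a - pW i a) = 0 := by simp [ent]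
  have hent0' : ent (pW i' a - pW i' a) = 0 := by simp [ent]
  have ev1 : ∀ᶠ x in nhds a, ent (pW i x - pW i a) < η := by
    have := hentc (Iio_mem_nhds (show ent (pW i a - pW i a) < η by rw [hent0]; exact hηpos))
    exact this
  have ev2 : ∀ᶠ x in nhds a, ent (pW i' x - pW i' a) < η := by
    have := hentc' (Iio_mem_nhds (show ent (pW i' a - pW i' a) < η by rw [hent0']; exact hηpos))
    exact this
  have hU : {x : X | ent (pW i x - pW i a) < η} ∩ {x | ent (pW i' x - pW i' a) < η} ∩
      (W i ∩ W i') ∈ nhds a :=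
    Filter.inter_mem (Filter.inter_mem ev1 ev2)
      (Filter.inter_mem ((hWopen i).mem_nhds hai) ((hWopen i').mem_nhds hai'))
  obtain ⟨r, hr0, hball⟩ := Metric.mem_nhds_iff.1 hU
  -- the endpoint of the rotation interval
  set creal : ℝ := min (b : ℝ) ((a : ℝ) + r/2) with hcreal
  have hc01 : creal ∈ Set.Icc (0:ℝ) 1 := by
    constructor
    · exact le_min b.2.1 (by have := a.2.1; linarith)
    · exact le_trans (min_le_left _ _) b.2.2
  set c : X := ⟨creal, hc01⟩ with hcdef
  have habv : (a:ℝ) < (b:ℝ) := hab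
  have hac : a < c := by
    show (a:ℝ) < (c:ℝ)
    exact lt_min habv (by linarith)
  have hcb : c ≤ b := by
    show (c:ℝ) ≤ (b:ℝ)
    exact min_le_left _ _
  have hsub : Icc a c ⊆ {x : X | ent (pW i x - pW i a) < η} ∩
      {x | ent (pW i' x - pW i' a) < η} ∩ (W i ∩ W i') := by
    intro x hx
    refine hball ?_
    rw [Metric.mem_ball, Subtype.dist_eq, Real.dist_eq]
    have h1 : (a:ℝ) ≤ (x:ℝ) := hx.1
    have h2 : (x:ℝ) ≤ creal := hx.2
    have h3 : creal ≤ (a:ℝ) + r/2 := min_le_right _ _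
    rw [abs_of_nonneg (by linarith)]
    linarith
  have hWi : Icc a c ⊆ W i := fun x hx => (hsub hx).2.1
  have hWi' : Icc a c ⊆ W i' := fun x hx => (hsub hx).2.2
  have hcWi' : c ∈ W i' := hWi' ⟨hac.le, le_rfl⟩
  -- the time reparametrization
  set τ : X → unitInterval := fun x =>
    Set.projIcc (0:ℝ) 1 zero_le_one (((x:ℝ) - (a:ℝ)) / (creal - (a:ℝ))) with hτdef
  have hτcont : Continuous τ :=
    continuous_projIcc.comp ((continuous_subtype_val.sub continuous_const).div_const _)
  have hca : (0:ℝ) < creal - (a:ℝ) := by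
    have : (a:ℝ) < creal := hac
    linarith
  have hτa : τ a = 0 := by
    rw [hτdef]
    simp only [sub_self, zero_div]
    apply Subtype.ext
    simp [Set.projIcc]
  have hτc : τ c = 1 := by
    rw [hτdef]
    simp only [hcdef]
    rw [div_self hca.ne']
    apply Subtype.ext
    simp [Set.projIcc]
  -- the rotating frame field
  set Fl : X → Matrix (Fin n) (Fin k) ℂ := fun x =>
    (1 - (γ (τ x) : ℂ)) • (pW i x * Fa) + ((γ (τ x) : ℂ)) • (pW i' x * H) with hFldef
  have hFla : Fl a = Fa := by
    rw [hFldef]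
    simp only [hτa, γ.source]
    simp [hfix]
  set Fc : Matrix (Fin n) (Fin k) ℂ := pW i' c * H with hFcdef
  have hFlc : Fl c = Fc := by
    rw [hFldef, hFcdef]
    simp only [hτc, γ.target]
    simp
  have hfixc : pW i' c * Fc = Fc := by
    rw [hFcdef, ← Matrix.mul_assoc, (hpWproj i' c hcWi').1]
  -- continuity
  have hzc : Continuous fun x => (γ (τ x) : ℂ) := γ.continuous.comp hτcont
  have hFlcont : ContinuousOn Fl (Icc a c) := by
    have h1 : ContinuousOn (fun x => pW i x * Fa) (Icc a c) :=
      (continuous_id.matrix_mul continuous_const).comp_continuousOn ((hpWcont i).mono hWi)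
    have h2 : ContinuousOn (fun x => pW i' x * H) (Icc a c) :=
      (continuous_id.matrix_mul continuous_const).comp_continuousOn ((hpWcont i').mono hWi')
    exact (((continuous_const.sub hzc).continuousOn).smul h1).add ((hzc.continuousOn).smul h2)
  -- the key estimate
  have hkey : ∀ x ∈ Icc a c, ∀ v : Fin k → ℂ,
      ‖(Fl x).mulVec v - (Φ (γ (τ x))).mulVec v‖ ≤ (σ/2) * ‖v‖ := by
    intro x hx v
    have hxU := hsub hx
    have e1 : ent (pW i x - pW i a) ≤ η := le_of_lt hxU.1.1
    have e2 : ent (pW i' x - pW i' a) ≤ η := le_of_lt hxU.1.2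
    have hm : Fl x = Φ (γ (τ x)) +
        ((1 - (γ (τ x) : ℂ)) • ((pW i x - pW i a) * Fa) +
          ((γ (τ x) : ℂ)) • ((pW i' x - pW i' a) * H)) := by
      have h : pW i x * Fa = Fa + (pW i x - pW i a) * Fa := by
        rw [Matrix.sub_mul, hfix, add_sub_cancel]
      have h' : pW i' x * H = H + (pW i' x - pW i' a) * H := by
        rw [Matrix.sub_mul, hHfix, add_sub_cancel]
      rw [hFldef]
      simp only [h, h', hΦdef]
      module
    have hdiff : (Fl x).mulVec v - (Φ (γ (τ x))).mulVec v =
        (1 - (γ (τ x) : ℂ)) • ((pW i x - pW i a).mulVec (Fa.mulVec v)) +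
          ((γ (τ x) : ℂ)) • ((pW i' x - pW i' a).mulVec (H.mulVec v)) := by
      rw [hm, Matrix.add_mulVec, add_sub_cancel_left, Matrix.add_mulVec,
        Matrix.smul_mulVec, Matrix.smul_mulVec, ← Matrix.mulVec_mulVec,
        ← Matrix.mulVec_mulVec]
    rw [hdiff]
    have b1 : ‖(pW i x - pW i a).mulVec (Fa.mulVec v)‖ ≤ η * (ent Fa * ‖v‖) := by
      calc ‖(pW i x - pW i a).mulVec (Fa.mulVec v)‖
          ≤ ent (pW i x - pW i a) * ‖Fa.mulVec v‖ := norm_mulVec_le _ _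
        _ ≤ η * (ent Fa * ‖v‖) := by
            have := norm_mulVec_le Fa v
            have := ent_nonneg (pW i x - pW i a)
            have := ent_nonneg Fa
            nlinarith [norm_nonneg (Fa.mulVec v)]
    have b2 : ‖(pW i' x - pW i' a).mulVec (H.mulVec v)‖ ≤ η * (ent H * ‖v‖) := by
      calc ‖(pW i' x - pW i' a).mulVec (H.mulVec v)‖
          ≤ ent (pW i' x - pW i' a) * ‖H.mulVec v‖ := norm_mulVec_le _ _
        _ ≤ η * (ent H * ‖v‖) := by
            have := norm_mulVec_le H v
            have := ent_nonneg (pW i' x - pW i' a)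
            have := ent_nonneg H
            nlinarith [norm_nonneg (H.mulVec v)]
    have bz : ‖(γ (τ x) : ℂ)‖ ≤ Z := hZ _
    have bz1 : ‖1 - (γ (τ x) : ℂ)‖ ≤ 1 + Z := by
      calc ‖1 - (γ (τ x) : ℂ)‖ ≤ ‖(1:ℂ)‖ + ‖(γ (τ x) : ℂ)‖ := norm_sub_le _ _
        _ ≤ 1 + Z := by rw [norm_one]; linarith
    calc ‖(1 - (γ (τ x) : ℂ)) • ((pW i x - pW i a).mulVec (Fa.mulVec v)) +
          ((γ (τ x) : ℂ)) • ((pW i' x - pW i' a).mulVec (H.mulVec v))‖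
        ≤ ‖1 - (γ (τ x) : ℂ)‖ * ‖(pW i x - pW i a).mulVec (Fa.mulVec v)‖ +
            ‖(γ (τ x) : ℂ)‖ * ‖(pW i' x - pW i' a).mulVec (H.mulVec v)‖ := by
          refine le_trans (norm_add_le _ _) ?_
          rw [norm_smul, norm_smul]
      _ ≤ (1 + Z) * (η * (ent Fa * ‖v‖)) + Z * (η * (ent H * ‖v‖)) := by
          have h1 := norm_nonneg ((pW i x - pW i a).mulVec (Fa.mulVec v))
          have h2 := norm_nonneg ((pW i' x - pW i' a).mulVec (H.mulVec v))
          have h3 := norm_nonneg (1 - (γ (τ x) : ℂ))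
          have h4 := norm_nonneg ((γ (τ x) : ℂ))
          have h5 : 0 ≤ η * (ent Fa * ‖v‖) :=
            mul_nonneg hηpos.le (mul_nonneg (ent_nonneg _) (norm_nonneg _))
          have h6 : 0 ≤ η * (ent H * ‖v‖) :=
            mul_nonneg hηpos.le (mul_nonneg (ent_nonneg _) (norm_nonneg _))
          nlinarith
      _ = D * η * ‖v‖ := by rw [hDdef]; ring
      _ ≤ (D + 1) * η * ‖v‖ := by
          have := norm_nonneg v
          nlinarith
      _ = (σ/2) * ‖v‖ := by
          rw [hηdef]
          field_simp
  -- injectivity of the rotating frame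
  have hFlinj : ∀ x ∈ Icc a c, Function.Injective (Fl x).mulVec := by
    intro x hx
    rw [mulVec_injective_iff]
    intro v hv
    by_contra hv0
    have h1 : σ * ‖v‖ ≤ ‖(Φ (γ (τ x))).mulVec v‖ := hσ (τ x) v
    have h2 := hkey x hx v
    rw [hv, zero_sub, norm_neg] at h2
    have hnv : (0:ℝ) < ‖v‖ := norm_pos_iff.2 hv0
    nlinarith
  -- range domination
  have hFlrange : ∀ x ∈ Icc a c, LinearMap.range (Fl x).mulVecLin ≤ Jn W pW x := by
    intro x hx
    rintro - ⟨v, rfl⟩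
    rw [Matrix.mulVecLin_apply]
    have hrw : (Fl x).mulVec v = (pW i x).mulVec ((1 - (γ (τ x) : ℂ)) • (Fa.mulVec v)) +
        (pW i' x).mulVec (((γ (τ x) : ℂ)) • (H.mulVec v)) := by
      rw [hFldef]
      show ((1 - (γ (τ x) : ℂ)) • (pW i x * Fa) + ((γ (τ x) : ℂ)) • (pW i' x * H)).mulVec v = _
      rw [Matrix.add_mulVec, Matrix.smul_mulVec, Matrix.smul_mulVec,
        ← Matrix.mulVec_mulVec, ← Matrix.mulVec_mulVec, Matrix.mulVec_smul, Matrix.mulVec_smul]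
    rw [hrw]
    refine Submodule.add_mem _ ?_ ?_
    · exact le_Jn W pW (hWi hx) ⟨_, Matrix.mulVecLin_apply _ _⟩
    · exact le_Jn W pW (hWi' hx) ⟨_, Matrix.mulVecLin_apply _ _⟩
  have hinjFc : Function.Injective Fc.mulVec := by
    have := hFlinj c ⟨hac.le, le_rfl⟩
    rwa [hFlc] at this
  exact ⟨c, Fc, hac, hcb, hcWi',
    ⟨Fl, hFlcont, hFla, hFlc, fun x hx => ⟨hFlinj x hx, hFlrange x hx⟩⟩, hinjFc, hfixc⟩

end Ctx2
end SelP

namespace SelP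
section Main
open Matrix Set
variable {n k : ℕ} {ι : Type*}

set_option maxHeartbeats 1600000 in
lemma main_good {W : ι → Set X} {pW : ι → X → Matrix (Fin n) (Fin n) ℂ}
    (hk : 1 ≤ k)
    (hWopen : ∀ i, IsOpen (W i)) (hWcover : ⋃ i, W i = Set.univ)
    (hpWcont : ∀ i, ContinuousOn (pW i) (W i))
    (hpWproj : ∀ i, ∀ x ∈ W i, IsIdempotentElem (pW i x) ∧ IsSelfAdjoint (pW i x))
    (hpWrank : ∀ i, ∀ x ∈ W i, k + 1 ≤ (pW i x).rank) :
    ∃ F : X → Matrix (Fin n) (Fin k) ℂ, Continuous F ∧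
      ∀ x : X, Function.Injective (F x).mulVec ∧
        LinearMap.range (F x).mulVecLin ≤ Jn W pW x := by
  classical
  have hcov : ∀ x : X, ∃ i, x ∈ W i := by
    intro x
    have : x ∈ ⋃ i, W i := by rw [hWcover]; exact mem_univ x
    exact mem_iUnion.1 this
  set x0 : X := ⟨0, by norm_num⟩ with hx0def
  set x1 : X := ⟨1, by norm_num⟩ with hx1def
  obtain ⟨i0, hi0⟩ := hcov x0
  obtain ⟨F0, hF0inj, hF0fix⟩ := exists_frame (hpWproj i0 x0 hi0).1
    (le_trans (Nat.le_succ k) (hpWrank i0 x0 hi0))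
  -- the set of reachable times
  set T : Set ℝ := {t | ∃ (ht : t ∈ Set.Icc (0:ℝ) 1) (i : ι)
      (Ft : Matrix (Fin n) (Fin k) ℂ), (⟨t, ht⟩ : X) ∈ W i ∧
      Function.Injective Ft.mulVec ∧ pW i ⟨t, ht⟩ * Ft = Ft ∧
      good W pW x0 ⟨t, ht⟩ F0 Ft} with hTdef
  have h0T : (0:ℝ) ∈ T := by
    refine ⟨by norm_num, i0, F0, hi0, hF0inj, hF0fix, ?_⟩
    refine ⟨fun _ => F0, continuousOn_const, rfl, rfl, ?_⟩
    intro x hx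
    have hxx : x = x0 := le_antisymm hx.2 hx.1
    subst hxx
    exact ⟨hF0inj, le_trans (range_le_of_mul_eq hF0fix) (le_Jn W pW hi0)⟩
  have hTne : T.Nonempty := ⟨0, h0T⟩
  have hTbdd : BddAbove T := by
    refine ⟨1, fun t ht => ?_⟩
    obtain ⟨h, -⟩ := ht
    exact h.2
  set s : ℝ := sSup T with hsdef
  have hs0 : 0 ≤ s := le_csSup hTbdd h0T
  have hs1 : s ≤ 1 := csSup_le hTne (fun t ht => by obtain ⟨h, -⟩ := ht; exact h.2)
  have hsIcc : s ∈ Set.Icc (0:ℝ) 1 := ⟨hs0, hs1⟩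
  set xs : X := ⟨s, hsIcc⟩ with hxsdef
  -- the key claim: s is itself reachable
  have hsT : s ∈ T := by
    obtain ⟨is, hxsi⟩ := hcov xs
    have hcA : ContinuousAt (pW is) xs := (hpWcont is).continuousAt ((hWopen is).mem_nhds hxsi)
    have hentc : ContinuousAt (fun x => ent (pW is x - pW is xs)) xs :=
      continuous_ent.continuousAt.comp (hcA.sub continuousAt_const)
    have hent0 : ent (pW is xs - pW is xs) = 0 := by simp [ent]
    have ev1 : ∀ᶠ x in nhds xs, ent (pW is x - pW is xs) < 1/4 := by
      have := hentc (Iio_mem_nhds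
        (show ent (pW is xs - pW is xs) < 1/4 by rw [hent0]; norm_num))
      exact this
    have hU : {x : X | ent (pW is x - pW is xs) < 1/4} ∩ W is ∈ nhds xs :=
      Filter.inter_mem ev1 ((hWopen is).mem_nhds hxsi)
    obtain ⟨r, hr0, hball⟩ := Metric.mem_nhds_iff.1 hU
    obtain ⟨b, hbT, hbgt⟩ : ∃ b ∈ T, s - r < b :=
      exists_lt_of_lt_csSup hTne (by rw [← hsdef]; linarith)
    have hbs : b ≤ s := le_csSup hTbdd hbT
    obtain ⟨hbIcc, ib, Fb, hbW, hFbinj, hFbfix, hgood0b⟩ := hbT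
    set xb : X := ⟨b, hbIcc⟩ with hxbdef
    have hIccball : Icc xb xs ⊆ {x : X | ent (pW is x - pW is xs) < 1/4} ∩ W is := by
      intro x hx
      refine hball ?_
      rw [Metric.mem_ball, Subtype.dist_eq, Real.dist_eq]
      have h1 : b ≤ (x:ℝ) := hx.1
      have h2 : (x:ℝ) ≤ s := hx.2
      rw [abs_of_nonpos (by linarith)]
      linarith
    rcases eq_or_lt_of_le hbs with heq | hlt
    · subst heq
      exact ⟨hbIcc, ib, Fb, hbW, hFbinj, hFbfix, hgood0b⟩
    · -- rotate from `ib` to `is` just after `b`, then chain up to `s`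
      have hxbxs : xb < xs := hlt
      have hxbW' : xb ∈ W is := (hIccball ⟨le_rfl, hxbxs.le⟩).2
      obtain ⟨c, Fc, hbc, hcxs, hcW, hgoodbc, hFcinj, hFcfix⟩ :=
        step2 W pW hWopen hpWcont hpWproj hpWrank hk hxbxs hbW hxbW' hFbinj hFbfix
      have hccxs : Icc c xs ⊆ W is := by
        intro x hx
        exact (hIccball ⟨le_trans hbc.le hx.1, hx.2⟩).2
      have hosc : ∀ x ∈ Icc c xs, ent (pW is x - pW is c) ≤ 1/2 := by
        intro x hx
        have hcm : c ∈ Icc xb xs := ⟨hbc.le, hcxs⟩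
        have hxm : x ∈ Icc xb xs := ⟨le_trans hbc.le hx.1, hx.2⟩
        have e1 : ent (pW is x - pW is xs) < 1/4 := (hIccball hxm).1
        have e2 : ent (pW is c - pW is xs) < 1/4 := (hIccball hcm).1
        have e3 : ent (pW is xs - pW is c) < 1/4 := by
          rw [show pW is xs - pW is c = -(pW is c - pW is xs) from (neg_sub _ _).symm, ent_neg]
          exact e2
        have e4 : pW is x - pW is c = (pW is x - pW is xs) + (pW is xs - pW is c) :=
          (sub_add_sub_cancel _ _ _).symm
        rw [e4]
        have := ent_add_le (pW is x - pW is xs) (pW is xs - pW is c)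
        linarith
      obtain ⟨hgoodcs, hfixs, hinjs⟩ := step0 W pW hpWcont hpWproj hcxs hccxs hosc hFcinj hFcfix
      refine ⟨hsIcc, is, pW is xs * Fc, hxsi, hinjs, hfixs, ?_⟩
      have h0b : x0 ≤ xb := hbIcc.1
      have h0c : x0 ≤ c := le_trans h0b hbc.le
      exact good_trans W pW h0c hcxs
        (good_trans W pW h0b hbc.le hgood0b hgoodbc) hgoodcs
  -- maximality forces `s = 1`
  have hseq : s = 1 := by
    by_contra hne
    have hslt : s < 1 := lt_of_le_of_ne hs1 hne
    obtain ⟨hsIcc', is, Fs, hxsi, hFsinj, hFsfix, hgood0s⟩ := hsT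
    have hxx : (⟨s, hsIcc'⟩ : X) = xs := rfl
    rw [hxx] at hxsi hFsfix hgood0s
    have hxsx1 : xs < x1 := hslt
    obtain ⟨c, Fc, hsc, hcx1, hcW, hgoodsc, hFcinj, hFcfix⟩ :=
      step2 W pW hWopen hpWcont hpWproj hpWrank hk hxsx1 hxsi hxsi hFsinj hFsfix
    have hcT : (c : ℝ) ∈ T := by
      refine ⟨c.2, is, Fc, ?_, hFcinj, ?_, ?_⟩
      · exact hcW
      · exact hFcfix
      · have h0s : x0 ≤ xs := hsIcc.1
        exact good_trans W pW h0s hsc.le hgood0s hgoodsc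
    have : (c : ℝ) ≤ s := le_csSup hTbdd hcT
    have : xs < xs := lt_of_lt_of_le hsc (by exact this)
    exact lt_irrefl _ this
  -- extract the global frame field
  obtain ⟨hsIcc', is, Fs, hxsi, hFsinj, hFsfix, hgood0s⟩ := hsT
  obtain ⟨F, hFcont, hFa, hFb, hFprop⟩ := hgood0s
  have hxseq : (⟨s, hsIcc'⟩ : X) = x1 := by
    apply Subtype.ext
    exact hseq
  rw [hxseq] at hFcont hFprop
  have huniv : Icc x0 x1 = (univ : Set X) := by
    ext x
    simp only [mem_Icc, mem_univ, iff_true]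
    exact ⟨x.2.1, x.2.2⟩
  rw [huniv] at hFcont hFprop
  exact ⟨F, continuousOn_univ.1 hFcont, fun x => hFprop x (mem_univ x)⟩

end Main
end SelP


/- One-dimensional selection principle on `[0,1]` with `k' = k + 1`: from an open
cover `W` of `[0,1]` and continuous projection-valued maps `pW i` on `W i` of
rank `≥ k + 1`, one gets a global continuous projection-valued map of rank `≥ k`
dominated pointwise by the join of the `pW i` (expressed via ranges). -/
theorem selection_principle_interval (k n : ℕ) (hk : 1 ≤ k)
    {ι : Type*} (W : ι → Set (Set.Icc (0 : ℝ) 1)) (hWopen : ∀ i, IsOpen (W i))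
    (hWcover : ⋃ i, W i = Set.univ)
    (pW : ι → Set.Icc (0 : ℝ) 1 → Matrix (Fin n) (Fin n) ℂ)
    (hpWcont : ∀ i, ContinuousOn (pW i) (W i))
    (hpWproj : ∀ i, ∀ x ∈ W i, IsIdempotentElem (pW i x) ∧ IsSelfAdjoint (pW i x))
    (hpWrank : ∀ i, ∀ x ∈ W i, k + 1 ≤ (pW i x).rank) :
    ∃ p : Set.Icc (0 : ℝ) 1 → Matrix (Fin n) (Fin n) ℂ, Continuous p ∧
      (∀ x, IsIdempotentElem (p x) ∧ IsSelfAdjoint (p x)) ∧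
      (∀ x, k ≤ (p x).rank) ∧
      ∀ x, LinearMap.range (Matrix.mulVecLin (p x)) ≤
        ⨆ i ∈ {i | x ∈ W i}, LinearMap.range (Matrix.mulVecLin (pW i x)) := by
  obtain ⟨F, hFc, hF⟩ := SelP.main_good hk hWopen hWcover hpWcont hpWproj hpWrank
  refine ⟨fun x => SelP.projOf (F x), SelP.continuous_projOf hFc (fun x => (hF x).1),
    fun x => ⟨SelP.projOf_idem (hF x).1, SelP.projOf_selfAdjoint _⟩,
    fun x => SelP.rank_projOf (hF x).1, fun x => ?_⟩
  exact le_trans SelP.range_projOf (hF x).2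
end
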